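/- arXiv:1608.05432 — 3 statements merged into one kernel-verified Lean document; each statement's English description precedes it below -/
import Mathlib

section
/- Let Σ be a simplicial complex and U ⊆ V(Σ) a subset of its vertices such that |Σ ∩ pow(U)| is contractible. Then the inclusion |Σ| ↪ |Σ ∪ pow(U)| is a homotopy equivalence. -/
/-- The closed geometric simplex on the finite vertex set `σ`, inside `V → ℝ`. -/
def simplexSet {V : Type*} (σ : Finset V) : Set (V → ℝ) :=
  {f | (∀ v, v ∉ σ → f v = 0) ∧ (∀ v, 0 ≤ f v) ∧ ∑ v ∈ σ, f v = 1}

/-- The underlying set of the geometric realization of `K`. -/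
def realizationSet {V : Type*} (K : Set (Finset V)) : Set (V → ℝ) :=
  {f | ∃ σ ∈ K, f ∈ simplexSet σ}

/-- The geometric realization of the simplicial complex `K`. -/
def Realization {V : Type*} (K : Set (Finset V)) : Type _ := realizationSet K

/-- The geometric realization carries the weak topology: the final topology determined
by the family of closed simplices. -/
instance realizationTopology {V : Type*} (K : Set (Finset V)) :
    TopologicalSpace (Realization K) :=
  ⨆ σ : {σ : Finset V // σ ∈ K},
    TopologicalSpace.coinduced
      (fun f : simplexSet σ.1 => (⟨f.1, σ.1, σ.2, f.2⟩ : Realization K))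
      inferInstance

lemma realization_mono {V : Type*} {K L : Set (Finset V)} (h : K ⊆ L) :
    realizationSet K ⊆ realizationSet L := fun _ ⟨σ, hσ, hf⟩ => ⟨σ, h hσ, hf⟩

/-- The continuous inclusion of geometric realizations induced by an inclusion of
simplicial complexes. -/
noncomputable def inclusionMap {V : Type*} {K L : Set (Finset V)} (h : K ⊆ L) :
    C(Realization K, Realization L) where
  toFun := fun p => ⟨p.1, realization_mono h p.2⟩
  continuous_toFun := by
    refine continuous_iSup_dom.mpr fun σ => ?_
    refine continuous_coinduced_dom.mpr ?_
    refine continuous_iff_coinduced_le.mpr ?_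
    exact le_iSup (fun τ : {σ : Finset V // σ ∈ L} =>
      TopologicalSpace.coinduced
        (fun f : simplexSet τ.1 => (⟨f.1, τ.1, τ.2, f.2⟩ : Realization L))
        inferInstance) ⟨σ.1, h σ.2⟩

def IsComplex {V : Type*} (K : Set (Finset V)) : Prop :=
  (∀ σ ∈ K, σ.Nonempty) ∧ ∀ σ ∈ K, ∀ τ : Finset V, τ ⊆ σ → τ.Nonempty → τ ∈ K

/-- The vertex set of a simplicial complex. -/
def vertexSet {V : Type*} (K : Set (Finset V)) : Set V := {v | {v} ∈ K}

/-- The full simplex on the vertex set `U`: all finite nonempty subsets of `U`. -/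
def fullComplex {V : Type*} (U : Set V) : Set (Finset V) :=
  {s | s.Nonempty ∧ ↑s ⊆ U}

noncomputable section GluingAux

open Set Topology

attribute [local instance] Classical.propDecidable

namespace GluingAux

variable {V : Type*}

/-- Inclusion of a closed simplex into a realization. -/
def incl {M : Set (Finset V)} (σ : Finset V) (hσ : σ ∈ M) (f : simplexSet σ) :
    Realization M := ⟨f.1, σ, hσ, f.2⟩

/-- Constructor for points of a realization, keeping the weak topology. -/
def rmk {M : Set (Finset V)} (x : V → ℝ) (hx : x ∈ realizationSet M) : Realization M :=
  ⟨x, hx⟩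

@[simp] lemma rmk_val {M : Set (Finset V)} (x : V → ℝ) (hx : x ∈ realizationSet M) :
    (rmk x hx).1 = x := rfl

lemma continuous_incl {M : Set (Finset V)} (σ : Finset V) (hσ : σ ∈ M) :
    Continuous (incl (M := M) σ hσ) := by
  refine continuous_iff_coinduced_le.mpr ?_
  exact le_iSup (fun τ : {σ : Finset V // σ ∈ M} =>
    TopologicalSpace.coinduced
      (fun f : simplexSet τ.1 => (⟨f.1, τ.1, τ.2, f.2⟩ : Realization M))
      inferInstance) ⟨σ, hσ⟩

lemma continuous_of_incl {M : Set (Finset V)} {T : Type*} [TopologicalSpace T]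
    {f : Realization M → T}
    (h : ∀ σ (hσ : σ ∈ M), Continuous fun y : simplexSet σ => f (incl σ hσ y)) :
    Continuous f := by
  refine continuous_iSup_dom.mpr fun σ => continuous_coinduced_dom.mpr ?_
  exact h σ.1 σ.2

lemma continuous_val {M : Set (Finset V)} :
    Continuous fun x : Realization M => x.1 :=
  continuous_of_incl fun σ hσ => continuous_subtype_val

lemma continuous_of_incl_prod {M : Set (Finset V)} {P T : Type*} [TopologicalSpace P]
    [LocallyCompactSpace P] [TopologicalSpace T] {f : Realization M × P → T}
    (h : ∀ σ (hσ : σ ∈ M),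
      Continuous fun q : simplexSet σ × P => f (incl σ hσ q.1, q.2)) :
    Continuous f := by
  have hslice : ∀ x : Realization M, Continuous fun p => f (x, p) := by
    intro x
    obtain ⟨σ, hσ, hx⟩ := x.2
    have hx' : incl (M := M) σ hσ ⟨x.1, hx⟩ = x := Subtype.ext rfl
    have := (h σ hσ).comp
      ((continuous_const (y := (⟨x.1, hx⟩ : simplexSet σ))).prodMk continuous_id)
    simpa [hx', Function.comp_def] using this
  let fc : Realization M → C(P, T) := fun x => ⟨fun p => f (x, p), hslice x⟩
  have hfc : Continuous fc := by
    refine continuous_of_incl fun σ hσ => ?_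
    exact (ContinuousMap.curry ⟨fun q : simplexSet σ × P => f (incl σ hσ q.1, q.2),
      h σ hσ⟩).continuous
  have := ContinuousMap.continuous_uncurry_of_continuous ⟨fc, hfc⟩
  exact this

/-! ### Basic facts about simplices and supports -/

lemma isClosed_simplexSet (σ : Finset V) : IsClosed (simplexSet σ) := by
  have : simplexSet σ = (⋂ v ∈ {v : V | v ∉ σ}, {f : V → ℝ | f v = 0}) ∩
      ((⋂ v : V, {f : V → ℝ | 0 ≤ f v}) ∩ {f : V → ℝ | ∑ v ∈ σ, f v = 1}) := by
    ext f
    simp only [simplexSet, Set.mem_setOf_eq, Set.mem_inter_iff, Set.mem_iInter]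
  rw [this]
  refine IsClosed.inter ?_ (IsClosed.inter ?_ ?_)
  · exact isClosed_biInter fun v _ => isClosed_eq (continuous_apply v) continuous_const
  · exact isClosed_iInter fun v => isClosed_le continuous_const (continuous_apply v)
  · exact isClosed_eq (by exact continuous_finset_sum _ fun v _ => continuous_apply v)
      continuous_const

lemma mem_Icc_of_mem_simplexSet {σ : Finset V} {x : V → ℝ} (hx : x ∈ simplexSet σ) (v : V) :
    x v ∈ Set.Icc (0:ℝ) 1 := by
  obtain ⟨h0, hpos, hsum⟩ := hx
  refine ⟨hpos v, ?_⟩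
  by_cases hv : v ∈ σ
  · calc x v ≤ ∑ w ∈ σ, x w := Finset.single_le_sum (fun i _ => hpos i) hv
    _ = 1 := hsum
  · rw [h0 v hv]
    exact zero_le_one

lemma isCompact_simplexSet (σ : Finset V) : IsCompact (simplexSet σ) := by
  refine IsCompact.of_isClosed_subset
    (isCompact_univ_pi (s := fun _ : V => (Set.Icc (0:ℝ) 1)) fun _ => isCompact_Icc)
    (isClosed_simplexSet σ) ?_
  intro x hx v _
  exact mem_Icc_of_mem_simplexSet hx v

instance compactSpace_simplexSet (σ : Finset V) : CompactSpace (simplexSet σ) :=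
  isCompact_iff_compactSpace.mp (isCompact_simplexSet σ)

/-- The support of a point of a simplex. -/
def gsupp (x : V → ℝ) (σ : Finset V) : Finset V := σ.filter fun v => x v ≠ 0

lemma gsupp_subset {x : V → ℝ} {σ : Finset V} : gsupp x σ ⊆ σ := Finset.filter_subset _ _

lemma mem_gsupp {x : V → ℝ} {σ : Finset V} (hx : x ∈ simplexSet σ) {v : V} :
    v ∈ gsupp x σ ↔ x v ≠ 0 := by
  constructor
  · intro h; exact (Finset.mem_filter.mp h).2
  · intro h
    refine Finset.mem_filter.mpr ⟨?_, h⟩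
    by_contra hv
    exact h (hx.1 v hv)

lemma gsupp_eq {x : V → ℝ} {σ τ : Finset V} (hx : x ∈ simplexSet σ)
    (hx' : x ∈ simplexSet τ) : gsupp x σ = gsupp x τ := by
  ext v
  rw [mem_gsupp hx, mem_gsupp hx']

lemma mem_simplexSet_gsupp {x : V → ℝ} {σ : Finset V} (hx : x ∈ simplexSet σ) :
    x ∈ simplexSet (gsupp x σ) := by
  refine ⟨fun v hv => ?_, hx.2.1, ?_⟩
  · by_contra h
    exact hv ((mem_gsupp hx).mpr h)
  · rw [gsupp, Finset.sum_filter_ne_zero]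
    exact hx.2.2

lemma gsupp_nonempty {x : V → ℝ} {σ : Finset V} (hx : x ∈ simplexSet σ) :
    (gsupp x σ).Nonempty := by
  by_contra h
  rw [Finset.not_nonempty_iff_eq_empty] at h
  have := (mem_simplexSet_gsupp hx).2.2
  rw [h] at this
  simp at this

lemma gsupp_mem {M : Set (Finset V)} (hM : IsComplex M) {σ : Finset V} (hσ : σ ∈ M)
    {x : V → ℝ} (hx : x ∈ simplexSet σ) : gsupp x σ ∈ M :=
  hM.2 σ hσ _ gsupp_subset (gsupp_nonempty hx)

lemma mem_realizationSet {M : Set (Finset V)} {σ : Finset V} (hσ : σ ∈ M) {x : V → ℝ}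
    (hx : x ∈ simplexSet σ) : x ∈ realizationSet M := ⟨σ, hσ, hx⟩




variable {V : Type*}

/-! ### Finite subcomplexes -/

lemma compactSpace_realization {M : Set (Finset V)} (hM : M.Finite) :
    CompactSpace (Realization M) := by
  haveI : Finite {σ : Finset V // σ ∈ M} := hM.to_subtype
  refine ⟨?_⟩
  have hcov : (Set.univ : Set (Realization M)) =
      ⋃ i : {σ : Finset V // σ ∈ M}, Set.range (incl (M := M) i.1 i.2) := by
    ext x
    simp only [Set.mem_univ, Set.mem_iUnion, Set.mem_range, true_iff]
    obtain ⟨σ, hσ, hx⟩ := x.2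
    exact ⟨⟨σ, hσ⟩, ⟨x.1, hx⟩, Subtype.ext rfl⟩
  rw [hcov]
  exact isCompact_iUnion fun i => isCompact_range (continuous_incl i.1 i.2)

lemma continuous_into_finite {M : Set (Finset V)} (hM : M.Finite) {Z : Type*}
    [TopologicalSpace Z] {f : Z → V → ℝ} (hf : Continuous f)
    (hmem : ∀ z, f z ∈ realizationSet M) :
    Continuous fun z => rmk (M := M) (f z) (hmem z) := by
  haveI := compactSpace_realization hM
  let e : Realization M → realizationSet M := fun x => ⟨x.1, x.2⟩
  have he : Continuous e := by
    refine continuous_of_incl fun σ hσ => ?_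
    exact Continuous.subtype_mk (by exact continuous_subtype_val) _
  have hbij : Function.Bijective e :=
    ⟨fun a b h => Subtype.ext (congrArg Subtype.val h), fun y => ⟨⟨y.1, y.2⟩, rfl⟩⟩
  let h := Continuous.homeoOfEquivCompactToT2 (f := Equiv.ofBijective e hbij) he
  have hcont : Continuous fun z => h.symm ⟨f z, hmem z⟩ :=
    h.symm.continuous.comp (hf.subtype_mk _)
  refine hcont.congr fun z => ?_
  have h1 : (⟨f z, hmem z⟩ : realizationSet M) = h (rmk (M := M) (f z) (hmem z)) := rfl
  rw [h1, Homeomorph.symm_apply_apply]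

/-! ### Subcomplex corestriction -/

lemma isClosed_realization_of_sub {L M : Set (Finset V)} (hL : IsComplex L)
    {D : Set (Realization L)} (hD : IsClosed D) :
    IsClosed {x : Realization M | x.1 ∈ Subtype.val '' D} := by
  rw [show (realizationTopology M) = ⨆ σ : {σ : Finset V // σ ∈ M},
    TopologicalSpace.coinduced
      (fun f : simplexSet σ.1 => (⟨f.1, σ.1, σ.2, f.2⟩ : Realization M))
      inferInstance from rfl]
  refine isClosed_iSup_iff.mpr ?_
  intro σ
  refine isClosed_coinduced.mpr ?_
  have key : ∀ τ : Finset V, τ ∈ L → IsClosed (Subtype.val '' D ∩ simplexSet τ) := by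
    intro τ hτ
    have h1 : IsClosed ((incl (M := L) τ hτ) ⁻¹' D) := hD.preimage (continuous_incl τ hτ)
    have h2 : IsCompact ((incl (M := L) τ hτ) ⁻¹' D) := h1.isCompact
    have h3 : IsCompact (Subtype.val '' ((incl (M := L) τ hτ) ⁻¹' D)) :=
      h2.image continuous_subtype_val
    have h4 : Subtype.val '' ((incl (M := L) τ hτ) ⁻¹' D) =
        Subtype.val '' D ∩ simplexSet τ := by
      ext x
      constructor
      · rintro ⟨y, hy, rfl⟩
        exact ⟨⟨incl τ hτ y, hy, rfl⟩, y.2⟩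
      · rintro ⟨⟨d, hd, hdx⟩, hxτ⟩
        refine ⟨⟨x, hxτ⟩, ?_, rfl⟩
        have heq2 : incl (M := L) τ hτ ⟨x, hxτ⟩ = d := Subtype.ext hdx.symm
        refine Set.mem_preimage.mpr ?_
        rw [heq2]; exact hd
    rw [← h4]
    exact h3.isClosed
  have hEsub : Subtype.val '' D ⊆ realizationSet L := by
    rintro x ⟨d, _, rfl⟩; exact d.2
  have hfin : {τ : Finset V | τ ∈ L ∧ τ ⊆ σ.1}.Finite := by
    refine Set.Finite.subset (Set.Finite.ofFinset (p := {τ : Finset V | τ ⊆ σ.1})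
      σ.1.powerset fun τ => by simp [Finset.mem_powerset]) fun τ hτ => hτ.2
  have hun : (fun f : simplexSet σ.1 => (⟨f.1, σ.1, σ.2, f.2⟩ : Realization M)) ⁻¹'
      {x : Realization M | x.1 ∈ Subtype.val '' D} =
      Subtype.val ⁻¹' (⋃ τ ∈ {τ : Finset V | τ ∈ L ∧ τ ⊆ σ.1},
        (Subtype.val '' D ∩ simplexSet τ)) := by
    ext y
    simp only [Set.mem_preimage, Set.mem_setOf_eq, Set.mem_iUnion, Set.mem_inter_iff,
      Set.mem_setOf_eq, exists_prop]
    constructor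
    · intro hy
      obtain ⟨τ0, hτ0, hyτ0⟩ := hEsub hy
      refine ⟨gsupp y.1 τ0, ⟨hL.2 τ0 hτ0 _ gsupp_subset (gsupp_nonempty hyτ0), ?_⟩,
        hy, mem_simplexSet_gsupp hyτ0⟩
      rw [gsupp_eq hyτ0 y.2]
      exact gsupp_subset
    · rintro ⟨τ, _, hy, _⟩
      exact hy
  refine hun ▸ ?_
  refine IsClosed.preimage continuous_subtype_val ?_
  exact Set.Finite.isClosed_biUnion hfin fun τ hτ => key τ hτ.1

lemma continuous_corestrict {L M : Set (Finset V)} (hL : IsComplex L)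
    {Z : Type*} [TopologicalSpace Z] {f : Z → Realization M} (hf : Continuous f)
    (hmem : ∀ z, (f z).1 ∈ realizationSet L) :
    Continuous fun z => rmk (M := L) (f z).1 (hmem z) := by
  rw [continuous_iff_isClosed]
  intro D hD
  have heq : (fun z => rmk (M := L) (f z).1 (hmem z)) ⁻¹' D =
      f ⁻¹' {x : Realization M | x.1 ∈ Subtype.val '' D} := by
    ext z
    simp only [Set.mem_preimage, Set.mem_setOf_eq]
    constructor
    · intro hz
      exact ⟨_, hz, rfl⟩
    · rintro ⟨d, hd, hdz⟩
      have hdd : d = rmk (M := L) (f z).1 (hmem z) := Subtype.ext hdz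
      rw [← hdd]; exact hd
  rw [heq]
  exact (isClosed_realization_of_sub hL hD).preimage hf

/-! ### Pasting and cone lemmas -/

lemma continuous_of_closed_cover {Z T : Type*} [TopologicalSpace Z] [TopologicalSpace T]
    {A B : Set Z} (hA : IsClosed A) (hB : IsClosed B) (hcov : A ∪ B = Set.univ)
    {f : Z → T} (hfA : ContinuousOn f A) (hfB : ContinuousOn f B) : Continuous f := by
  rw [continuous_iff_isClosed]
  intro C hC
  have h1 : IsClosed (A ∩ f ⁻¹' C) := hfA.preimage_isClosed_of_isClosed hA hC
  have h2 : IsClosed (B ∩ f ⁻¹' C) := hfB.preimage_isClosed_of_isClosed hB hC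
  have : f ⁻¹' C = (A ∩ f ⁻¹' C) ∪ (B ∩ f ⁻¹' C) := by
    rw [← Set.union_inter_distrib_right, hcov, Set.univ_inter]
  rw [this]
  exact h1.union h2

lemma cone_continuous {Z Y T : Type*} [TopologicalSpace Z] [TopologicalSpace Y]
    [TopologicalSpace T]
    (J : C(Y × ℝ, T)) (t0 : T) (h0 : ∀ y, J (y, 0) = t0)
    {μ : Z → ℝ} (hμ : Continuous μ)
    {g : {z : Z // μ z ≠ 0} → Y} (hg : Continuous g)
    {C : Set Y} (hC : IsCompact C) (hgC : ∀ z, g z ∈ C)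
    {F : Z → T} (hF : ∀ (z : Z) (h : μ z ≠ 0), F z = J (g ⟨z, h⟩, μ z))
    (hF0 : ∀ z, μ z = 0 → F z = t0) : Continuous F := by
  rw [continuous_iff_continuousAt]
  intro z0
  by_cases h0' : μ z0 = 0
  · have : ContinuousAt F z0 ↔ Filter.Tendsto F (nhds z0) (nhds t0) := by
      rw [ContinuousAt, hF0 z0 h0']
    rw [this]
    intro s hs
    rw [Filter.mem_map]
    obtain ⟨O, hOs, hO, ht0O⟩ := mem_nhds_iff.mp hs
    obtain ⟨U', V', hU', hV', hCU', h0V', hsub⟩ :=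
      generalized_tube_lemma hC isCompact_singleton (hO.preimage J.continuous)
        (by
          rintro ⟨y, r⟩ ⟨hy, hr⟩
          simp only [Set.mem_singleton_iff] at hr
          simp only [Set.mem_preimage]
          rw [show ((y, r) : Y × ℝ) = (y, 0) by rw [hr]]
          rw [h0 y]
          exact ht0O)
    have hV0 : (0:ℝ) ∈ V' := h0V' rfl
    have hnhds : μ ⁻¹' V' ∈ nhds z0 := by
      refine hμ.continuousAt.preimage_mem_nhds ?_
      rw [h0']
      exact hV'.mem_nhds hV0
    refine Filter.mem_of_superset hnhds ?_
    intro z hz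
    by_cases hz0 : μ z = 0
    · rw [Set.mem_preimage] at hz ⊢
      rw [hF0 z hz0]
      exact hOs ht0O
    · rw [Set.mem_preimage] at hz ⊢
      rw [hF z hz0]
      exact hOs (hsub ⟨hCU' (hgC ⟨z, hz0⟩), hz⟩)
  · have hopen : IsOpen {z | μ z ≠ 0} := (isClosed_eq hμ continuous_const).isOpen_compl
    have hcont : ContinuousOn F {z | μ z ≠ 0} := by
      rw [continuousOn_iff_continuous_restrict]
      have hcomp : Continuous fun z : {z // μ z ≠ 0} => J (g z, μ z.1) :=
        J.continuous.comp (hg.prodMk (hμ.comp continuous_subtype_val))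
      exact hcomp.congr fun z => (hF z.1 z.2).symm
    exact hcont.continuousAt (hopen.mem_nhds h0')



variable {V : Type*}

/-! ### Complexes -/

lemma isComplex_full (U : Set V) : IsComplex (fullComplex U) :=
  ⟨fun _ hs => hs.1, fun σ hσ τ hτσ hτ => ⟨hτ, fun v hv => hσ.2 (hτσ hv)⟩⟩

lemma isComplex_inter {K : Set (Finset V)} (hK : IsComplex K) (U : Set V) :
    IsComplex (K ∩ fullComplex U) :=
  ⟨fun s hs => hs.2.1, fun σ hσ τ hτσ hτ =>
    ⟨hK.2 σ hσ.1 τ hτσ hτ, ((isComplex_full U).2 σ hσ.2 τ hτσ hτ)⟩⟩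

/-- The subcomplex `Σ ∩ pow(U)` together with the `n`-skeleton of `pow(U)`
(simplices with at most `n` vertices). -/
def Mn (K : Set (Finset V)) (U : Set V) (n : ℕ) : Set (Finset V) :=
  (K ∩ fullComplex U) ∪ {s | s ∈ fullComplex U ∧ s.card ≤ n}

lemma isComplex_Mn {K : Set (Finset V)} (hK : IsComplex K) (U : Set V) (n : ℕ) :
    IsComplex (Mn K U n) := by
  constructor
  · rintro s (hs | hs)
    · exact hs.2.1
    · exact hs.1.1
  · rintro σ (hσ | hσ) τ hτσ hτ
    · exact Or.inl ((isComplex_inter hK U).2 σ hσ τ hτσ hτ)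
    · exact Or.inr ⟨(isComplex_full U).2 σ hσ.1 τ hτσ hτ,
        le_trans (Finset.card_le_card hτσ) hσ.2⟩

lemma Mn_subset_full {K : Set (Finset V)} {U : Set V} {n : ℕ} :
    Mn K U n ⊆ fullComplex U := by
  rintro s (hs | hs)
  · exact hs.2
  · exact hs.1

lemma Mn_mono {K : Set (Finset V)} {U : Set V} {m n : ℕ} (h : m ≤ n) :
    Mn K U m ⊆ Mn K U n := by
  rintro s (hs | hs)
  · exact Or.inl hs
  · exact Or.inr ⟨hs.1, le_trans hs.2 h⟩

lemma LL_subset_Mn {K : Set (Finset V)} {U : Set V} {n : ℕ} :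
    K ∩ fullComplex U ⊆ Mn K U n := Set.subset_union_left

/-! ### Clamping to `[0,1]` -/

/-- Clamp a real number to `[0,1]`. -/
def cl01 (r : ℝ) : ℝ := max 0 (min 1 r)

lemma continuous_cl01 : Continuous cl01 :=
  continuous_const.max (continuous_const.min continuous_id)

@[simp] lemma cl01_zero : cl01 0 = 0 := by simp [cl01]
@[simp] lemma cl01_one : cl01 1 = 1 := by simp [cl01]

lemma cl01_mem (r : ℝ) : cl01 r ∈ Set.Icc (0:ℝ) 1 :=
  ⟨le_max_left _ _, max_le zero_le_one (min_le_left _ _)⟩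

lemma cl01_of_mem {r : ℝ} (hr : r ∈ Set.Icc (0:ℝ) 1) : cl01 r = r := by
  rcases hr with ⟨h0, h1⟩
  rw [cl01, min_eq_right h1, max_eq_right h0]

@[simp] lemma cl01_cl01 (r : ℝ) : cl01 (cl01 r) = cl01 r := cl01_of_mem (cl01_mem r)

/-! ### Barycentric radial coordinates on a simplex -/

/-- `1 -` the gauge of `x` relative to the barycenter of `σ`: `0` at the barycenter,
`1` on the boundary. -/
def lam (σ : Finset V) (x : V → ℝ) : ℝ :=
  1 - σ.card * (if h : σ.Nonempty then σ.inf' h x else 0)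

/-- Radial projection away from the barycenter of `σ`, scaled by `1/μ`. -/
def rad (σ : Finset V) (μ : ℝ) (x : V → ℝ) : V → ℝ := fun v =>
  if v ∈ σ then (σ.card : ℝ)⁻¹ + (x v - (σ.card : ℝ)⁻¹) / μ else 0

lemma continuous_lam (σ : Finset V) : Continuous fun x : V → ℝ => lam σ x := by
  unfold lam
  by_cases h : σ.Nonempty
  · simp only [dif_pos h]
    exact continuous_const.sub (continuous_const.mul
      (Continuous.finset_inf'_apply h fun i _ => continuous_apply i))
  · simp only [dif_neg h]
    exact continuous_const

lemma card_pos_real {σ : Finset V} (h : σ.Nonempty) : (0:ℝ) < σ.card := by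
  exact_mod_cast Finset.card_pos.mpr h

lemma inf'_nonneg {σ : Finset V} (h : σ.Nonempty) {x : V → ℝ} (hx : x ∈ simplexSet σ) :
    0 ≤ σ.inf' h x := by
  rw [Finset.le_inf'_iff]
  exact fun v _ => hx.2.1 v

lemma lam_le_one {σ : Finset V} (h : σ.Nonempty) {x : V → ℝ} (hx : x ∈ simplexSet σ) :
    lam σ x ≤ 1 := by
  rw [lam, dif_pos h]
  have := mul_nonneg (le_of_lt (card_pos_real h)) (inf'_nonneg h hx)
  linarith

lemma card_mul_inf'_le_one {σ : Finset V} (h : σ.Nonempty) {x : V → ℝ}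
    (hx : x ∈ simplexSet σ) : (σ.card : ℝ) * σ.inf' h x ≤ 1 := by
  have hle : σ.card • σ.inf' h x ≤ ∑ v ∈ σ, x v :=
    Finset.card_nsmul_le_sum σ x _ fun v hv => Finset.inf'_le x hv
  rw [hx.2.2] at hle
  simpa [nsmul_eq_mul] using hle

lemma lam_nonneg {σ : Finset V} (h : σ.Nonempty) {x : V → ℝ} (hx : x ∈ simplexSet σ) :
    0 ≤ lam σ x := by
  rw [lam, dif_pos h]
  linarith [card_mul_inf'_le_one h hx]

lemma inf'_eq_zero_iff {σ : Finset V} (h : σ.Nonempty) {x : V → ℝ}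
    (hx : x ∈ simplexSet σ) : σ.inf' h x = 0 ↔ ∃ v ∈ σ, x v = 0 := by
  constructor
  · intro h0
    obtain ⟨v, hv, hveq⟩ := Finset.exists_mem_eq_inf' h x
    exact ⟨v, hv, by rw [← hveq, h0]⟩
  · rintro ⟨v, hv, hv0⟩
    refine le_antisymm ?_ (inf'_nonneg h hx)
    rw [← hv0]
    exact Finset.inf'_le x hv

lemma gsupp_ne_iff {σ : Finset V} {x : V → ℝ} (hx : x ∈ simplexSet σ) :
    gsupp x σ ≠ σ ↔ ∃ v ∈ σ, x v = 0 := by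
  rw [gsupp]
  constructor
  · intro hne
    by_contra hall
    push_neg at hall
    exact hne (Finset.filter_eq_self.mpr fun v hv => hall v hv)
  · rintro ⟨v, hv, hv0⟩ heq
    have : v ∈ Finset.filter (fun v => x v ≠ 0) σ := by rw [heq]; exact hv
    exact (Finset.mem_filter.mp this).2 hv0

lemma lam_eq_one_iff {σ : Finset V} (h : σ.Nonempty) {x : V → ℝ} (hx : x ∈ simplexSet σ) :
    lam σ x = 1 ↔ gsupp x σ ≠ σ := by
  rw [lam, dif_pos h, gsupp_ne_iff hx, ← inf'_eq_zero_iff h hx]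
  have hcard : (σ.card : ℝ) ≠ 0 := ne_of_gt (card_pos_real h)
  constructor
  · intro heq
    have : (σ.card : ℝ) * σ.inf' h x = 0 := by linarith
    exact (mul_eq_zero.mp this).resolve_left hcard
  · intro h0
    rw [h0]
    ring



variable {V : Type*}

lemma continuous_rad {Z : Type*} [TopologicalSpace Z] (σ : Finset V) {f : Z → V → ℝ}
    {μf : Z → ℝ} (hf : Continuous f) (hμ : Continuous μf) (h0 : ∀ z, μf z ≠ 0) :
    Continuous fun z => rad σ (μf z) (f z) := by
  refine continuous_pi fun v => ?_
  by_cases hv : v ∈ σ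
  · simp only [rad, if_pos hv]
    exact continuous_const.add
      ((((continuous_apply v).comp hf).sub continuous_const).div hμ h0)
  · simp only [rad, if_neg hv]
    exact continuous_const

lemma rad_mem {σ : Finset V} (h : σ.Nonempty) {x : V → ℝ} (hx : x ∈ simplexSet σ)
    {μ : ℝ} (hμ : 0 < μ) (hlam : lam σ x ≤ μ) : rad σ μ x ∈ simplexSet σ := by
  have hm : (0:ℝ) < σ.card := card_pos_real h
  have hm' : (σ.card : ℝ) ≠ 0 := ne_of_gt hm
  have hinf : (1 - μ) / σ.card ≤ σ.inf' h x := by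
    rw [div_le_iff₀ hm]
    have := hlam
    rw [lam, dif_pos h] at this
    linarith [mul_comm (σ.card : ℝ) (σ.inf' h x)]
  refine ⟨fun v hv => by simp [rad, hv], fun v => ?_, ?_⟩
  · by_cases hv : v ∈ σ
    · simp only [rad, if_pos hv]
      have heq : (σ.card:ℝ)⁻¹ + (x v - (σ.card:ℝ)⁻¹)/μ = (x v - (1-μ)/σ.card)/μ := by
        field_simp
        ring
      rw [heq]
      refine div_nonneg ?_ hμ.le
      have : (1 - μ) / σ.card ≤ x v := le_trans hinf (Finset.inf'_le x hv)
      linarith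
    · simp [rad, hv]
  · have hdrop : ∑ v ∈ σ, rad σ μ x v =
        ∑ v ∈ σ, ((σ.card:ℝ)⁻¹ + (x v - (σ.card:ℝ)⁻¹)/μ) :=
      Finset.sum_congr rfl fun v hv => by simp [rad, hv]
    rw [hdrop, Finset.sum_add_distrib, ← Finset.sum_div, Finset.sum_sub_distrib]
    simp only [Finset.sum_const, nsmul_eq_mul, hx.2.2]
    rw [mul_inv_cancel₀ hm']
    simp

lemma inf'_affine {σ : Finset V} (h : σ.Nonempty) (x : V → ℝ) {a : ℝ} (b : ℝ) (ha : 0 ≤ a) :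
    σ.inf' h (fun v => a * x v + b) = a * σ.inf' h x + b := by
  refine le_antisymm ?_ ?_
  · obtain ⟨v, hv, hveq⟩ := Finset.exists_mem_eq_inf' h x
    calc σ.inf' h (fun v => a * x v + b) ≤ a * x v + b := Finset.inf'_le _ hv
    _ = a * σ.inf' h x + b := by rw [← hveq]
  · rw [Finset.le_inf'_iff]
    intro v hv
    have := Finset.inf'_le x hv
    nlinarith

lemma lam_rad {σ : Finset V} (h : σ.Nonempty) (x : V → ℝ) {μ : ℝ} (hμ : 0 < μ) :
    lam σ (rad σ μ x) = lam σ x / μ := by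
  have hm : (0:ℝ) < σ.card := card_pos_real h
  have hm' : (σ.card : ℝ) ≠ 0 := ne_of_gt hm
  have hμ' : μ ≠ 0 := ne_of_gt hμ
  have hcongr : σ.inf' h (rad σ μ x) =
      σ.inf' h (fun v => μ⁻¹ * x v + (σ.card:ℝ)⁻¹ * (1 - μ⁻¹)) := by
    refine Finset.inf'_congr h rfl fun v hv => ?_
    simp only [rad, if_pos hv]
    field_simp
    ring
  rw [lam, lam, dif_pos h, dif_pos h, hcongr,
    inf'_affine h x _ (by positivity : (0:ℝ) ≤ μ⁻¹)]
  field_simp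
  ring

lemma rad_one {σ : Finset V} {x : V → ℝ} (hx : x ∈ simplexSet σ) : rad σ 1 x = x := by
  funext v
  by_cases hv : v ∈ σ
  · simp [rad, hv]
  · simp [rad, hv, (hx.1 v hv).symm]

/-! ### The time coordinate of the radial projection on a prism -/

lemma stc_mem {μ t : ℝ} (hμ : 0 < μ) (habs : |2*t - 1| ≤ μ) :
    1/2 + (t - 1/2)/μ ∈ Set.Icc (0:ℝ) 1 := by
  rw [abs_le] at habs
  constructor
  · have h1 : -(1/2) ≤ (t - 1/2)/μ := by
      rw [neg_le, ← neg_div, div_le_iff₀ hμ]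
      linarith
    linarith
  · have h1 : (t - 1/2)/μ ≤ 1/2 := by
      rw [div_le_iff₀ hμ]
      linarith
    linarith

lemma stc_endpoint {μ t : ℝ} (hμ : 0 < μ) (habs : |2*t - 1| = μ) :
    1/2 + (t - 1/2)/μ = 0 ∨ 1/2 + (t - 1/2)/μ = 1 := by
  have hμ' : μ ≠ 0 := ne_of_gt hμ
  rcases (abs_eq hμ.le).mp habs with h | h
  · right
    have : t - 1/2 = μ/2 := by linarith
    rw [this]
    field_simp
    ring
  · left
    have : t - 1/2 = -(μ/2) := by linarith
    rw [this]
    field_simp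
    ring



variable {V : Type*}

/-! ### The contraction data and the joining map -/

/-- Straight-line join towards the basepoint `q`: at `r = 0` it is `q`,
at `r = 1` it is the identity. -/
def Jq (q y : V → ℝ) (r : ℝ) : V → ℝ := fun v => cl01 r * y v + (1 - cl01 r) * q v

lemma Jq_zero (q y : V → ℝ) : Jq q y 0 = q := by funext v; simp [Jq]

lemma Jq_one (q y : V → ℝ) : Jq q y 1 = y := by funext v; simp [Jq]

lemma mem_simplexSet_of_subset {x : V → ℝ} {τ ρ : Finset V} (hx : x ∈ simplexSet τ)
    (h : τ ⊆ ρ) : x ∈ simplexSet ρ := by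
  refine ⟨fun v hv => hx.1 v fun hvτ => hv (h hvτ), hx.2.1, ?_⟩
  rw [← hx.2.2]
  exact (Finset.sum_subset h fun v _ hvτ => hx.1 v hvτ).symm

lemma sum_one_of_subset {x : V → ℝ} {τ ρ : Finset V} (hx : x ∈ simplexSet τ)
    (h : τ ⊆ ρ) : ∑ v ∈ ρ, x v = 1 := (mem_simplexSet_of_subset hx h).2.2

lemma Jq_mem {U : Set V} {q y : V → ℝ} (hq : q ∈ realizationSet (fullComplex U))
    (hy : y ∈ realizationSet (fullComplex U)) (r : ℝ) :
    Jq q y r ∈ realizationSet (fullComplex U) := by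
  obtain ⟨τy, hτy, hyy⟩ := hy
  obtain ⟨τq, hτq, hqq⟩ := hq
  refine ⟨τy ∪ τq, ⟨hτy.1.mono Finset.subset_union_left, ?_⟩, ?_, fun v => ?_, ?_⟩
  · rw [Finset.coe_union]
    exact Set.union_subset hτy.2 hτq.2
  · intro v hv
    rw [Finset.mem_union] at hv
    push_neg at hv
    simp [Jq, hyy.1 v hv.1, hqq.1 v hv.2]
  · have h01 := cl01_mem r
    exact add_nonneg (mul_nonneg h01.1 (hyy.2.1 v))
      (mul_nonneg (by linarith [h01.2]) (hqq.2.1 v))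
  · simp only [Jq]
    rw [Finset.sum_add_distrib, ← Finset.mul_sum, ← Finset.mul_sum,
      sum_one_of_subset hyy Finset.subset_union_left,
      sum_one_of_subset hqq Finset.subset_union_right]
    ring

/-- The contraction of `|K ∩ pow U|`, extended as a raw function on ambient space. -/
def chat (K : Set (Finset V)) (U : Set V)
    (ct : C(Realization (K ∩ fullComplex U) × ℝ, Realization (K ∩ fullComplex U)))
    (y : V → ℝ) (r : ℝ) : V → ℝ :=
  if h : y ∈ realizationSet (K ∩ fullComplex U) then (ct (rmk y h, r)).1 else y

lemma chat_mem {K : Set (Finset V)} {U : Set V}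
    {ct : C(Realization (K ∩ fullComplex U) × ℝ, Realization (K ∩ fullComplex U))}
    {y : V → ℝ} (r : ℝ)
    (hy : y ∈ realizationSet (K ∩ fullComplex U)) :
    chat K U ct y r ∈ realizationSet (K ∩ fullComplex U) := by
  rw [chat, dif_pos hy]
  exact (ct (rmk y hy, r)).2

lemma chat_one {K : Set (Finset V)} {U : Set V}
    {ct : C(Realization (K ∩ fullComplex U) × ℝ, Realization (K ∩ fullComplex U))}
    (hct1 : ∀ y, ct (y, (1:ℝ)) = y) {y : V → ℝ}
    (hy : y ∈ realizationSet (K ∩ fullComplex U)) : chat K U ct y 1 = y := by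
  rw [chat, dif_pos hy, hct1 (rmk y hy)]
  rfl

lemma chat_zero {K : Set (Finset V)} {U : Set V}
    {ct : C(Realization (K ∩ fullComplex U) × ℝ, Realization (K ∩ fullComplex U))}
    {q : V → ℝ}
    (hct0 : ∀ y, (ct (y, (0:ℝ))).1 = q) {y : V → ℝ}
    (hy : y ∈ realizationSet (K ∩ fullComplex U)) : chat K U ct y 0 = q := by
  rw [chat, dif_pos hy, hct0 (rmk y hy)]

/-! ### The inductive construction -/

/-- Junk-tolerant support of a point. -/
def jsupp (x : V → ℝ) : Finset V :=
  if h : ∃ σ : Finset V, x ∈ simplexSet σ then gsupp x h.choose else ∅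

lemma jsupp_eq {x : V → ℝ} {σ : Finset V} (hx : x ∈ simplexSet σ) :
    jsupp x = gsupp x σ := by
  rw [jsupp, dif_pos ⟨σ, hx⟩]
  exact gsupp_eq (Exists.choose_spec (⟨σ, hx⟩ : ∃ σ : Finset V, x ∈ simplexSet σ)) hx

/-- Extension of the time-1 boundary map over a new simplex, by coning off the
contraction of `|K ∩ pow U|`. -/
def f1c (K : Set (Finset V)) (U : Set V)
    (ct : C(Realization (K ∩ fullComplex U) × ℝ, Realization (K ∩ fullComplex U)))
    (q : V → ℝ)
    (prev : (V → ℝ) × ℝ → V → ℝ) (σ : Finset V) (y : V → ℝ) : V → ℝ :=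
  if lam σ y = 0 then q
  else chat K U ct (prev (rad σ (lam σ y) y, 1)) (lam σ y)

/-- The prescribed map on the boundary sphere of the prism `σ × [0,1]`. -/
def gS (K : Set (Finset V)) (U : Set V)
    (ct : C(Realization (K ∩ fullComplex U) × ℝ, Realization (K ∩ fullComplex U)))
    (q : V → ℝ)
    (prev : (V → ℝ) × ℝ → V → ℝ) (σ : Finset V) (z : (V → ℝ) × ℝ) : V → ℝ :=
  if z.2 = 0 then z.1
  else if z.2 = 1 then f1c K U ct q prev σ z.1
  else prev z

/-- The radial (cone) extension of `gS` over the whole prism. -/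
def coneF (K : Set (Finset V)) (U : Set V)
    (ct : C(Realization (K ∩ fullComplex U) × ℝ, Realization (K ∩ fullComplex U)))
    (q : V → ℝ)
    (prev : (V → ℝ) × ℝ → V → ℝ) (σ : Finset V) (z : (V → ℝ) × ℝ) : V → ℝ :=
  if max (lam σ z.1) |2 * cl01 z.2 - 1| = 0 then q
  else Jq q (gS K U ct q prev σ
      (rad σ (max (lam σ z.1) |2 * cl01 z.2 - 1|) z.1,
       1/2 + (cl01 z.2 - 1/2) / max (lam σ z.1) |2 * cl01 z.2 - 1|))
    (max (lam σ z.1) |2 * cl01 z.2 - 1|)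

/-- The deformation retraction, constructed skeleton by skeleton. -/
def seqF (K : Set (Finset V)) (U : Set V)
    (ct : C(Realization (K ∩ fullComplex U) × ℝ, Realization (K ∩ fullComplex U)))
    (q : V → ℝ) :
    ℕ → (V → ℝ) × ℝ → V → ℝ
  | 0 => fun z => z.1
  | (n+1) => fun z =>
    if z.1 ∈ realizationSet (Mn K U n) then seqF K U ct q n (z.1, cl01 z.2)
    else coneF K U ct q (seqF K U ct q n) (jsupp z.1) z

lemma seqF_zero (K : Set (Finset V)) (U : Set V)
    (ct : C(Realization (K ∩ fullComplex U) × ℝ, Realization (K ∩ fullComplex U)))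
    (q : V → ℝ) (z) :
    seqF K U ct q 0 z = z.1 := rfl

lemma seqF_succ_of_mem (K : Set (Finset V)) (U : Set V)
    (ct : C(Realization (K ∩ fullComplex U) × ℝ, Realization (K ∩ fullComplex U)))
    (q : V → ℝ) (n : ℕ)
    {x : V → ℝ} (hx : x ∈ realizationSet (Mn K U n)) (t : ℝ) :
    seqF K U ct q (n+1) (x, t) = seqF K U ct q n (x, cl01 t) := by
  simp only [seqF]
  rw [if_pos hx]

lemma seqF_succ_of_not_mem (K : Set (Finset V)) (U : Set V)
    (ct : C(Realization (K ∩ fullComplex U) × ℝ, Realization (K ∩ fullComplex U)))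
    (q : V → ℝ) (n : ℕ)
    {x : V → ℝ} (hx : x ∉ realizationSet (Mn K U n)) (t : ℝ) :
    seqF K U ct q (n+1) (x, t) = coneF K U ct q (seqF K U ct q n) (jsupp x) (x, t) := by
  simp only [seqF]
  rw [if_neg hx]

lemma seqF_clamp (K : Set (Finset V)) (U : Set V)
    (ct : C(Realization (K ∩ fullComplex U) × ℝ, Realization (K ∩ fullComplex U)))
    (q : V → ℝ) (n : ℕ)
    (x : V → ℝ) (t : ℝ) : seqF K U ct q n (x, t) = seqF K U ct q n (x, cl01 t) := by
  cases n with
  | zero => rfl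
  | succ n =>
    by_cases hx : x ∈ realizationSet (Mn K U n)
    · rw [seqF_succ_of_mem K U ct q n hx, seqF_succ_of_mem K U ct q n hx, cl01_cl01]
    · rw [seqF_succ_of_not_mem K U ct q n hx, seqF_succ_of_not_mem K U ct q n hx]
      simp only [coneF, cl01_cl01]

/-- Membership of a simplex point in the previous skeleton, characterized via support. -/
lemma mem_Mn_iff_gsupp {K : Set (Finset V)} {U : Set V} (hK : IsComplex K) {n : ℕ}
    {σ : Finset V} (hσfull : σ ∈ fullComplex U) (hσK : σ ∉ K) (hcard : σ.card = n + 1)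
    {x : V → ℝ} (hx : x ∈ simplexSet σ) :
    x ∈ realizationSet (Mn K U n) ↔ gsupp x σ ≠ σ := by
  constructor
  · rintro ⟨τ, hτ, hxτ⟩ heq
    have hg : σ = gsupp x τ := by rw [← gsupp_eq hx hxτ, heq]
    have hsub : σ ⊆ τ := hg ▸ gsupp_subset
    rcases hτ with hτK | hτcard
    · exact hσK (hK.2 τ hτK.1 σ hsub hσfull.1)
    · have h1 := Finset.card_le_card hsub
      have h2 := hτcard.2
      omega
  · intro hne
    refine ⟨gsupp x σ, Or.inr ⟨⟨gsupp_nonempty hx, ?_⟩, ?_⟩, mem_simplexSet_gsupp hx⟩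
    · exact subset_trans (Finset.coe_subset.mpr gsupp_subset) hσfull.2
    · have := Finset.card_lt_card (Finset.ssubset_iff_subset_ne.mpr ⟨gsupp_subset, hne⟩)
      omega

lemma Mn_zero {K : Set (Finset V)} {U : Set V} (hK : IsComplex K) :
    Mn K U 0 = K ∩ fullComplex U := by
  rw [Mn]
  refine Set.union_eq_self_of_subset_right ?_
  rintro s ⟨hs, hcard⟩
  exact absurd (Finset.card_pos.mpr hs.1) (by omega)



variable {V : Type*} {K : Set (Finset V)} {U : Set V}
  {ct : C(Realization (K ∩ fullComplex U) × ℝ, Realization (K ∩ fullComplex U))}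
  {q : V → ℝ}

lemma mem_Mn_iff_lam (hK : IsComplex K) {n : ℕ} {σ : Finset V}
    (hσfull : σ ∈ fullComplex U) (hσK : σ ∉ K) (hcard : σ.card = n + 1)
    {x : V → ℝ} (hx : x ∈ simplexSet σ) :
    x ∈ realizationSet (Mn K U n) ↔ lam σ x = 1 := by
  rw [mem_Mn_iff_gsupp hK hσfull hσK hcard hx, ← lam_eq_one_iff hσfull.1 hx]

lemma rad_mem_Mn (hK : IsComplex K) {n : ℕ} {σ : Finset V}
    (hσfull : σ ∈ fullComplex U) (hσK : σ ∉ K) (hcard : σ.card = n + 1)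
    {x : V → ℝ} (hx : x ∈ simplexSet σ) (h0 : lam σ x ≠ 0) :
    rad σ (lam σ x) x ∈ simplexSet σ ∧
      rad σ (lam σ x) x ∈ realizationSet (Mn K U n) := by
  have hpos : 0 < lam σ x := lt_of_le_of_ne (lam_nonneg hσfull.1 hx) (Ne.symm h0)
  have hmem : rad σ (lam σ x) x ∈ simplexSet σ := rad_mem hσfull.1 hx hpos le_rfl
  refine ⟨hmem, ?_⟩
  rw [mem_Mn_iff_lam hK hσfull hσK hcard hmem, lam_rad hσfull.1 x hpos, div_self h0]

/-- All the pointwise properties of the `n`-th stage of the construction. -/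
def SeqProps (K : Set (Finset V)) (U : Set V)
    (ct : C(Realization (K ∩ fullComplex U) × ℝ, Realization (K ∩ fullComplex U)))
    (q : V → ℝ) (n : ℕ) : Prop :=
  ∀ x, x ∈ realizationSet (Mn K U n) →
    (∀ t, seqF K U ct q n (x, t) ∈ realizationSet (fullComplex U)) ∧
    seqF K U ct q n (x, 0) = x ∧
    seqF K U ct q n (x, 1) ∈ realizationSet (K ∩ fullComplex U) ∧
    (x ∈ realizationSet (K ∩ fullComplex U) → ∀ t, seqF K U ct q n (x, t) = x)

lemma f1c_mem (hK : IsComplex K) (hq : q ∈ realizationSet (K ∩ fullComplex U))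
    {n : ℕ} {σ : Finset V} (hσfull : σ ∈ fullComplex U) (hσK : σ ∉ K)
    (hcard : σ.card = n + 1) (hprev : SeqProps K U ct q n)
    {y : V → ℝ} (hy : y ∈ simplexSet σ) :
    f1c K U ct q (seqF K U ct q n) σ y ∈ realizationSet (K ∩ fullComplex U) := by
  by_cases h0 : lam σ y = 0
  · rw [f1c, if_pos h0]
    exact hq
  · rw [f1c, if_neg h0]
    obtain ⟨hsimp, hmem⟩ := rad_mem_Mn hK hσfull hσK hcard hy h0
    exact chat_mem _ ((hprev _ hmem).2.2.1)

lemma f1c_boundary (hK : IsComplex K) (hct1 : ∀ y, ct (y, (1:ℝ)) = y)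
    {n : ℕ} {σ : Finset V} (hσfull : σ ∈ fullComplex U) (hσK : σ ∉ K)
    (hcard : σ.card = n + 1) (hprev : SeqProps K U ct q n)
    {y : V → ℝ} (hy : y ∈ simplexSet σ) (hlam : lam σ y = 1) :
    f1c K U ct q (seqF K U ct q n) σ y = seqF K U ct q n (y, 1) := by
  have hymem : y ∈ realizationSet (Mn K U n) :=
    (mem_Mn_iff_lam hK hσfull hσK hcard hy).mpr hlam
  rw [f1c, if_neg (by rw [hlam]; exact one_ne_zero), hlam, rad_one hy]
  exact chat_one hct1 ((hprev _ hymem).2.2.1)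

lemma gS_eval_of_mem (hK : IsComplex K) (hct1 : ∀ y, ct (y, (1:ℝ)) = y)
    {n : ℕ} {σ : Finset V} (hσfull : σ ∈ fullComplex U) (hσK : σ ∉ K)
    (hcard : σ.card = n + 1) (hprev : SeqProps K U ct q n)
    {y : V → ℝ} (hy : y ∈ simplexSet σ) (hymem : y ∈ realizationSet (Mn K U n))
    (u : ℝ) : gS K U ct q (seqF K U ct q n) σ (y, u) = seqF K U ct q n (y, u) := by
  by_cases h0 : u = 0
  · subst h0
    rw [gS]
    simp only [if_pos rfl]
    exact ((hprev _ hymem).2.1).symm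
  · by_cases h1 : u = 1
    · subst h1
      rw [gS]
      simp only [if_neg one_ne_zero, if_pos rfl]
      exact f1c_boundary hK hct1 hσfull hσK hcard hprev hy
        ((mem_Mn_iff_lam hK hσfull hσK hcard hy).mp hymem)
    · rw [gS]
      simp only [if_neg h0, if_neg h1]

lemma gS_mem (hK : IsComplex K) (hq : q ∈ realizationSet (K ∩ fullComplex U))
    {n : ℕ} {σ : Finset V} (hσfull : σ ∈ fullComplex U) (hσK : σ ∉ K)
    (hcard : σ.card = n + 1) (hprev : SeqProps K U ct q n)
    {y u} (hy : y ∈ simplexSet σ)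
    (hcase : u = 0 ∨ u = 1 ∨ y ∈ realizationSet (Mn K U n)) :
    gS K U ct q (seqF K U ct q n) σ (y, u) ∈ realizationSet (fullComplex U) := by
  by_cases h0 : u = 0
  · rw [gS]; simp only [if_pos h0]
    exact mem_realizationSet hσfull hy
  · by_cases h1 : u = 1
    · rw [gS]; simp only [if_neg h0, if_pos h1]
      exact realization_mono Set.inter_subset_right
        (f1c_mem hK hq hσfull hσK hcard hprev hy)
    · rw [gS]; simp only [if_neg h0, if_neg h1]
      rcases hcase with h | h | h
      · exact absurd h h0
      · exact absurd h h1
      · exact (hprev _ h).1 u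

lemma coneF_max_one {prev : (V → ℝ) × ℝ → V → ℝ} {σ : Finset V} {x : V → ℝ} {t : ℝ}
    (hx : x ∈ simplexSet σ) (hμ : max (lam σ x) |2 * cl01 t - 1| = 1) :
    coneF K U ct q prev σ (x, t) = gS K U ct q prev σ (x, cl01 t) := by
  simp only [coneF]
  rw [hμ, if_neg one_ne_zero, rad_one hx,
    show 1/2 + (cl01 t - 1/2)/(1:ℝ) = cl01 t by ring, Jq_one]

lemma abs_two_cl01_sub_one_le (t : ℝ) : |2 * cl01 t - 1| ≤ 1 := by
  have := cl01_mem t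
  rw [abs_le]
  constructor <;> linarith [this.1, this.2]

/-- The heart of the construction: all the pointwise properties, by induction on skeleta. -/
lemma seq_props (hK : IsComplex K) (hq : q ∈ realizationSet (K ∩ fullComplex U))
    (hct0 : ∀ y, (ct (y, (0:ℝ))).1 = q) (hct1 : ∀ y, ct (y, (1:ℝ)) = y) :
    ∀ n, SeqProps K U ct q n := by
  intro n
  induction n with
  | zero =>
    intro x hx
    rw [Mn_zero hK] at hx
    exact ⟨fun t => realization_mono Set.inter_subset_right hx, rfl,
      hx, fun _ _ => rfl⟩
  | succ n ih =>
    intro x hx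
    by_cases hmem : x ∈ realizationSet (Mn K U n)
    · obtain ⟨h1, h2, h3, h4⟩ := ih x hmem
      refine ⟨fun t => ?_, ?_, ?_, fun hL t => ?_⟩
      · rw [seqF_succ_of_mem K U ct q n hmem t]
        exact h1 _
      · rw [seqF_succ_of_mem K U ct q n hmem 0, cl01_zero]
        exact h2
      · rw [seqF_succ_of_mem K U ct q n hmem 1, cl01_one]
        exact h3
      · rw [seqF_succ_of_mem K U ct q n hmem t]
        exact h4 hL _
    · -- a new top-dimensional simplex
      obtain ⟨σ, hσfull, hσK, hcard, hxσ, hjs⟩ :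
          ∃ σ, σ ∈ fullComplex U ∧ σ ∉ K ∧ σ.card = n + 1 ∧ x ∈ simplexSet σ ∧
            jsupp x = σ := by
        obtain ⟨τ, hτ, hxτ⟩ := hx
        set σ := gsupp x τ with hσdef
        have hxσ : x ∈ simplexSet σ := mem_simplexSet_gsupp hxτ
        have hσM : σ ∈ Mn K U (n+1) :=
          gsupp_mem (isComplex_Mn hK U (n+1)) hτ hxτ
        have hσfull : σ ∈ fullComplex U := Mn_subset_full hσM
        have hσK : σ ∉ K := by
          intro hσK
          exact hmem ⟨σ, LL_subset_Mn ⟨hσK, hσfull⟩, hxσ⟩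
        have hcard : σ.card = n + 1 := by
          rcases hσM with h | h
          · exact absurd h.1 hσK
          · have hle := h.2
            by_contra hne
            refine hmem ⟨σ, Or.inr ⟨hσfull, by omega⟩, hxσ⟩
        have hjs : jsupp x = σ := by
          rw [jsupp_eq hxσ]
          exact gsupp_eq hxσ hxτ ▸ rfl
        exact ⟨σ, hσfull, hσK, hcard, hxσ, hjs⟩
      have hσne : σ.Nonempty := hσfull.1
      have hqful : q ∈ realizationSet (fullComplex U) :=
        realization_mono Set.inter_subset_right hq
      have hxnotL : x ∉ realizationSet (K ∩ fullComplex U) := by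
        intro hL
        exact hmem (realization_mono LL_subset_Mn hL)
      refine ⟨fun t => ?_, ?_, ?_, fun hL _ => absurd hL hxnotL⟩
      · -- membership in the full realization
        rw [seqF_succ_of_not_mem K U ct q n hmem t, hjs]
        by_cases hμ0 : max (lam σ x) |2 * cl01 t - 1| = 0
        · simp only [coneF]
          rw [if_pos hμ0]
          exact hqful
        · simp only [coneF]
          rw [if_neg hμ0]
          have hμpos : 0 < max (lam σ x) |2 * cl01 t - 1| :=
            lt_of_le_of_ne (le_max_of_le_right (abs_nonneg _)) (Ne.symm hμ0)
          have hsx : rad σ (max (lam σ x) |2 * cl01 t - 1|) x ∈ simplexSet σ :=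
            rad_mem hσne hxσ hμpos (le_max_left _ _)
          refine Jq_mem hqful ?_ _
          refine gS_mem hK hq hσfull hσK hcard ih hsx ?_
          rcases max_choice (lam σ x) |2 * cl01 t - 1| with hc | hc
          · right; right
            have hl0 : lam σ x ≠ 0 := by rw [← hc]; exact ne_of_gt hμpos
            rw [hc] at hμpos ⊢
            exact (rad_mem_Mn hK hσfull hσK hcard hxσ hl0).2
          · rcases stc_endpoint hμpos hc.symm with h | h
            · exact Or.inl h
            · exact Or.inr (Or.inl h)
      · -- value at time 0
        rw [seqF_succ_of_not_mem K U ct q n hmem 0, hjs]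
        have hμ : max (lam σ x) |2 * cl01 (0:ℝ) - 1| = 1 := by
          rw [cl01_zero]
          rw [show |2 * (0:ℝ) - 1| = 1 by norm_num]
          exact max_eq_right (lam_le_one hσne hxσ)
        rw [coneF_max_one hxσ hμ, cl01_zero, gS]
        simp
      · -- value at time 1 lies in |K ∩ pow U|
        rw [seqF_succ_of_not_mem K U ct q n hmem 1, hjs]
        have hμ : max (lam σ x) |2 * cl01 (1:ℝ) - 1| = 1 := by
          rw [cl01_one]
          rw [show |2 * (1:ℝ) - 1| = 1 by norm_num]
          exact max_eq_right (lam_le_one hσne hxσ)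
        rw [coneF_max_one hxσ hμ, cl01_one, gS]
        simp only [if_neg one_ne_zero, if_pos rfl]
        exact f1c_mem hK hq hσfull hσK hcard ih hxσ

/-- The continuity matching lemma: on a new top-dimensional simplex, the whole next
stage is given by the single cone formula. -/
lemma seq_succ_eq_coneF (hK : IsComplex K) (hq : q ∈ realizationSet (K ∩ fullComplex U))
    (hct0 : ∀ y, (ct (y, (0:ℝ))).1 = q) (hct1 : ∀ y, ct (y, (1:ℝ)) = y)
    {n : ℕ} {σ : Finset V} (hσfull : σ ∈ fullComplex U) (hσK : σ ∉ K)
    (hcard : σ.card = n + 1) {x : V → ℝ} (hx : x ∈ simplexSet σ) (t : ℝ) :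
    seqF K U ct q (n+1) (x, t) = coneF K U ct q (seqF K U ct q n) σ (x, t) := by
  by_cases hmem : x ∈ realizationSet (Mn K U n)
  · rw [seqF_succ_of_mem K U ct q n hmem t]
    have hlam : lam σ x = 1 := (mem_Mn_iff_lam hK hσfull hσK hcard hx).mp hmem
    have hμ : max (lam σ x) |2 * cl01 t - 1| = 1 := by
      rw [hlam]
      exact max_eq_left (abs_two_cl01_sub_one_le t)
    rw [coneF_max_one hx hμ]
    exact (gS_eval_of_mem hK hct1 hσfull hσK hcard (seq_props hK hq hct0 hct1 n)
      hx hmem (cl01 t)).symm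
  · rw [seqF_succ_of_not_mem K U ct q n hmem t]
    have hjs : jsupp x = σ := by
      rw [jsupp_eq hx]
      by_contra hne
      exact hmem ((mem_Mn_iff_gsupp hK hσfull hσK hcard hx).mpr hne)
    rw [hjs]



variable {V : Type*} {K : Set (Finset V)} {U : Set V}
  {ct : C(Realization (K ∩ fullComplex U) × ℝ, Realization (K ∩ fullComplex U))}
  {q : V → ℝ}

lemma Jq_mem_union {y : V → ℝ} {τy τq : Finset V} (hy : y ∈ simplexSet τy)
    (hq' : q ∈ simplexSet τq) (r : ℝ) : Jq q y r ∈ simplexSet (τy ∪ τq) := by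
  refine ⟨?_, fun v => ?_, ?_⟩
  · intro v hv
    rw [Finset.mem_union] at hv
    push_neg at hv
    simp [Jq, hy.1 v hv.1, hq'.1 v hv.2]
  · have h01 := cl01_mem r
    exact add_nonneg (mul_nonneg h01.1 (hy.2.1 v))
      (mul_nonneg (by linarith [h01.2]) (hq'.2.1 v))
  · simp only [Jq]
    rw [Finset.sum_add_distrib, ← Finset.mul_sum, ← Finset.mul_sum,
      sum_one_of_subset hy Finset.subset_union_left,
      sum_one_of_subset hq' Finset.subset_union_right]
    ring

lemma continuous_Jq_raw : Continuous fun p : (V → ℝ) × ℝ => Jq q p.1 p.2 := by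
  refine continuous_pi fun v => ?_
  simp only [Jq]
  have hc : Continuous fun p : (V → ℝ) × ℝ => cl01 p.2 :=
    continuous_cl01.comp continuous_snd
  exact (hc.mul ((continuous_apply v).comp continuous_fst)).add
    ((continuous_const.sub hc).mul continuous_const)

lemma continuous_Jq (hq : q ∈ realizationSet (fullComplex U)) :
    Continuous fun p : Realization (fullComplex U) × ℝ =>
      rmk (M := fullComplex U) (Jq q p.1.1 p.2) (Jq_mem hq p.1.2 p.2) := by
  obtain ⟨τq, hτq, hqq⟩ := hq
  refine continuous_of_incl_prod fun σ hσ => ?_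
  have hστq : σ ∪ τq ∈ fullComplex U := by
    refine ⟨hσ.1.mono Finset.subset_union_left, ?_⟩
    rw [Finset.coe_union]
    exact Set.union_subset hσ.2 hτq.2
  have hN : ({σ ∪ τq} : Set (Finset V)).Finite := Set.finite_singleton _
  have hmem : ∀ w : simplexSet σ × ℝ,
      Jq q w.1.1 w.2 ∈ realizationSet ({σ ∪ τq} : Set (Finset V)) := fun w =>
    ⟨σ ∪ τq, rfl, Jq_mem_union w.1.2 hqq w.2⟩
  have hraw : Continuous fun w : simplexSet σ × ℝ => Jq q w.1.1 w.2 :=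
    continuous_Jq_raw.comp ((continuous_subtype_val.comp continuous_fst).prodMk
      continuous_snd)
  have h1 : Continuous fun w : simplexSet σ × ℝ =>
      rmk (M := ({σ ∪ τq} : Set (Finset V))) (Jq q w.1.1 w.2) (hmem w) :=
    continuous_into_finite hN hraw hmem
  have h2 : Continuous fun w : simplexSet σ × ℝ =>
      inclusionMap (show ({σ ∪ τq} : Set (Finset V)) ⊆ fullComplex U by
        rintro s rfl; exact hστq)
        (rmk (M := ({σ ∪ τq} : Set (Finset V))) (Jq q w.1.1 w.2) (hmem w)) :=
    (inclusionMap _).continuous.comp h1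
  exact h2.congr fun w => Subtype.ext rfl



variable {V : Type*} {K : Set (Finset V)} {U : Set V}
  {ct : C(Realization (K ∩ fullComplex U) × ℝ, Realization (K ∩ fullComplex U))}
  {q : V → ℝ}

lemma continuous_of_closed_cover3 {Z T : Type*} [TopologicalSpace Z] [TopologicalSpace T]
    {A B C : Set Z} (hA : IsClosed A) (hB : IsClosed B) (hC : IsClosed C)
    (hcov : A ∪ B ∪ C = Set.univ) {f : Z → T} (hfA : ContinuousOn f A)
    (hfB : ContinuousOn f B) (hfC : ContinuousOn f C) : Continuous f := by
  rw [continuous_iff_isClosed]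
  intro D hD
  have h1 : IsClosed (A ∩ f ⁻¹' D) := hfA.preimage_isClosed_of_isClosed hA hD
  have h2 : IsClosed (B ∩ f ⁻¹' D) := hfB.preimage_isClosed_of_isClosed hB hD
  have h3 : IsClosed (C ∩ f ⁻¹' D) := hfC.preimage_isClosed_of_isClosed hC hD
  have : f ⁻¹' D = (A ∩ f ⁻¹' D) ∪ (B ∩ f ⁻¹' D) ∪ (C ∩ f ⁻¹' D) := by
    rw [← Set.union_inter_distrib_right, ← Set.union_inter_distrib_right, hcov,
      Set.univ_inter]
  rw [this]
  exact (h1.union h2).union h3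

lemma finite_proper_faces (τ : Finset V) :
    {ρ : Finset V | ρ ⊆ τ ∧ ρ ≠ τ ∧ ρ.Nonempty}.Finite :=
  Set.Finite.subset (Set.Finite.ofFinset (p := {ρ : Finset V | ρ ⊆ τ}) τ.powerset
    fun ρ => by simp [Finset.mem_powerset]) fun ρ h => h.1

lemma proper_faces_subset_Mn {τ : Finset V} {n : ℕ} (hτfull : τ ∈ fullComplex U)
    (hcard : τ.card = n + 1) :
    {ρ : Finset V | ρ ⊆ τ ∧ ρ ≠ τ ∧ ρ.Nonempty} ⊆ Mn K U n := by
  rintro ρ ⟨hsub, hne, hρne⟩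
  refine Or.inr ⟨⟨hρne, subset_trans (Finset.coe_subset.mpr hsub) hτfull.2⟩, ?_⟩
  have := Finset.card_lt_card (Finset.ssubset_iff_subset_ne.mpr ⟨hsub, hne⟩)
  omega

lemma mem_proper_faces {τ : Finset V} (hτne : τ.Nonempty) {x : V → ℝ}
    (hx : x ∈ simplexSet τ) (hlam : lam τ x = 1) :
    x ∈ realizationSet {ρ : Finset V | ρ ⊆ τ ∧ ρ ≠ τ ∧ ρ.Nonempty} :=
  ⟨gsupp x τ, ⟨gsupp_subset, (lam_eq_one_iff hτne hx).mp hlam, gsupp_nonempty hx⟩,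
    mem_simplexSet_gsupp hx⟩

/-- The boundary sphere of the prism `τ × [0,1]`. -/
def sphereSet (τ : Finset V) : Set ((V → ℝ) × ℝ) :=
  {z | z.1 ∈ simplexSet τ ∧ z.2 ∈ Set.Icc (0:ℝ) 1 ∧
    (lam τ z.1 = 1 ∨ z.2 = 0 ∨ z.2 = 1)}

lemma isCompact_sphereSet (τ : Finset V) : IsCompact (sphereSet τ) := by
  have hclosed : IsClosed (sphereSet τ) := by
    refine IsClosed.inter ((isClosed_simplexSet τ).preimage continuous_fst) ?_
    refine IsClosed.inter (isClosed_Icc.preimage continuous_snd) ?_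
    refine IsClosed.union ?_ ?_
    · exact isClosed_eq ((continuous_lam τ).comp continuous_fst) continuous_const
    · exact (isClosed_eq continuous_snd continuous_const).union
        (isClosed_eq continuous_snd continuous_const)
  · refine IsCompact.of_isClosed_subset
      ((isCompact_simplexSet τ).prod (isCompact_Icc (a := (0:ℝ)) (b := 1))) hclosed ?_
    exact fun z hz => ⟨hz.1, hz.2.1⟩

lemma sphere_case (hK : IsComplex K) {n : ℕ} {τ : Finset V}
    (hτfull : τ ∈ fullComplex U) (hτK : τ ∉ K) (hcard : τ.card = n + 1)
    {z : (V → ℝ) × ℝ} (hz : z ∈ sphereSet τ) :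
    z.2 = 0 ∨ z.2 = 1 ∨ z.1 ∈ realizationSet (Mn K U n) := by
  rcases hz.2.2 with h | h | h
  · exact Or.inr (Or.inr ((mem_Mn_iff_lam hK hτfull hτK hcard hz.1).mpr h))
  · exact Or.inl h
  · exact Or.inr (Or.inl h)

/-- The bundled boundary-sphere map over a new simplex. -/
def gSb (hK : IsComplex K) (hq : q ∈ realizationSet (K ∩ fullComplex U))
    (hct0 : ∀ y, (ct (y, (0:ℝ))).1 = q) (hct1 : ∀ y, ct (y, (1:ℝ)) = y)
    {n : ℕ} {τ : Finset V} (hτfull : τ ∈ fullComplex U) (hτK : τ ∉ K)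
    (hcard : τ.card = n + 1) (z : sphereSet τ) : Realization (fullComplex U) :=
  rmk (gS K U ct q (seqF K U ct q n) τ z.1)
    (gS_mem hK hq hτfull hτK hcard (seq_props hK hq hct0 hct1 n) z.2.1
      (sphere_case hK hτfull hτK hcard z.2))

/-- The bundled construction maps. -/
def seqFc (hK : IsComplex K) (hq : q ∈ realizationSet (K ∩ fullComplex U))
    (hct0 : ∀ y, (ct (y, (0:ℝ))).1 = q) (hct1 : ∀ y, ct (y, (1:ℝ)) = y) (n : ℕ)
    (p : Realization (Mn K U n) × ℝ) : Realization (fullComplex U) :=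
  rmk (seqF K U ct q n (p.1.1, p.2)) ((seq_props hK hq hct0 hct1 n p.1.1 p.1.2).1 p.2)

section Induction

variable (hK : IsComplex K) (hq : q ∈ realizationSet (K ∩ fullComplex U))
  (hct0 : ∀ y, (ct (y, (0:ℝ))).1 = q) (hct1 : ∀ y, ct (y, (1:ℝ)) = y)

/-- Continuity of the coned-off contraction on a new simplex. -/
lemma f1b_continuous {n : ℕ} {τ : Finset V} (hτfull : τ ∈ fullComplex U)
    (hτK : τ ∉ K) (hcard : τ.card = n + 1)
    (ih : Continuous (seqFc hK hq hct0 hct1 n)) :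
    Continuous fun y : simplexSet τ =>
      rmk (M := fullComplex U) (f1c K U ct q (seqF K U ct q n) τ y.1)
        (realization_mono Set.inter_subset_right
          (f1c_mem hK hq hτfull hτK hcard (seq_props hK hq hct0 hct1 n) y.2)) := by
  have hτne : τ.Nonempty := hτfull.1
  have hqful : q ∈ realizationSet (fullComplex U) :=
    realization_mono Set.inter_subset_right hq
  set Nτ : Set (Finset V) := {ρ : Finset V | ρ ⊆ τ ∧ ρ ≠ τ ∧ ρ.Nonempty} with hNτ
  have hNfin : Nτ.Finite := finite_proper_faces τ
  have hNsub : Nτ ⊆ Mn K U n := proper_faces_subset_Mn hτfull hcard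
  haveI : CompactSpace (Realization Nτ) := compactSpace_realization hNfin
  -- the boundary values map, through the finite subcomplex of proper faces
  have hwmem : ∀ y : {y : simplexSet τ // lam τ y.1 ≠ 0},
      rad τ (lam τ y.1.1) y.1.1 ∈ realizationSet Nτ := by
    intro y
    have hpos : 0 < lam τ y.1.1 := lt_of_le_of_ne (lam_nonneg hτne y.1.2) (Ne.symm y.2)
    have hmem : rad τ (lam τ y.1.1) y.1.1 ∈ simplexSet τ := rad_mem hτne y.1.2 hpos le_rfl
    refine mem_proper_faces hτne hmem ?_
    rw [lam_rad hτne _ hpos, div_self y.2]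
  have hwcont : Continuous fun y : {y : simplexSet τ // lam τ y.1 ≠ 0} =>
      rmk (M := Nτ) (rad τ (lam τ y.1.1) y.1.1) (hwmem y) := by
    refine continuous_into_finite hNfin ?_ hwmem
    exact continuous_rad τ (continuous_subtype_val.comp continuous_subtype_val)
      ((continuous_lam τ).comp (continuous_subtype_val.comp continuous_subtype_val))
      fun y => y.2
  -- evaluation of the previous stage at time 1, corestricted to `|K ∩ pow U|`
  have hmmem : ∀ z : Realization Nτ,
      (seqFc hK hq hct0 hct1 n (inclusionMap hNsub z, (1:ℝ))).1 ∈
        realizationSet (K ∩ fullComplex U) := fun z =>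
    (seq_props hK hq hct0 hct1 n z.1 (realization_mono hNsub z.2)).2.2.1
  have hmcont : Continuous fun z : Realization Nτ =>
      rmk (M := K ∩ fullComplex U)
        (seqFc hK hq hct0 hct1 n (inclusionMap hNsub z, (1:ℝ))).1 (hmmem z) := by
    refine continuous_corestrict (isComplex_inter hK U) ?_ hmmem
    exact ih.comp ((inclusionMap hNsub).continuous.prodMk continuous_const)
  -- apply the cone lemma
  refine cone_continuous (J := ((inclusionMap (Set.inter_subset_right :
      K ∩ fullComplex U ⊆ fullComplex U)).comp ct))
    (t0 := rmk q hqful) (fun y => Subtype.ext (hct0 y))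
    (μ := fun y : simplexSet τ => lam τ y.1)
    ((continuous_lam τ).comp continuous_subtype_val)
    (g := fun y => rmk (M := K ∩ fullComplex U)
      (seqFc hK hq hct0 hct1 n (inclusionMap hNsub (rmk (M := Nτ)
        (rad τ (lam τ y.1.1) y.1.1) (hwmem y)), (1:ℝ))).1
      (hmmem _))
    (hmcont.comp hwcont)
    (hC := isCompact_range hmcont)
    (fun y => ⟨_, rfl⟩) ?_ ?_
  · -- the formula away from the apex
    intro y h
    apply Subtype.ext
    show f1c K U ct q (seqF K U ct q n) τ y.1 = _
    rw [f1c, if_neg h]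
    have hpf : seqF K U ct q n (rad τ (lam τ y.1) y.1, 1) ∈
        realizationSet (K ∩ fullComplex U) := hmmem (rmk _ (hwmem ⟨y, h⟩))
    rw [chat, dif_pos hpf]
    rfl
  · -- the apex value
    intro y h
    apply Subtype.ext
    show f1c K U ct q (seqF K U ct q n) τ y.1 = q
    rw [f1c, if_pos h]

end Induction



variable {V : Type*} {K : Set (Finset V)} {U : Set V}
  {ct : C(Realization (K ∩ fullComplex U) × ℝ, Realization (K ∩ fullComplex U))}
  {q : V → ℝ}

section Induction2

variable (hK : IsComplex K) (hq : q ∈ realizationSet (K ∩ fullComplex U))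
  (hct0 : ∀ y, (ct (y, (0:ℝ))).1 = q) (hct1 : ∀ y, ct (y, (1:ℝ)) = y)

lemma gSb_continuous {n : ℕ} {τ : Finset V} (hτfull : τ ∈ fullComplex U)
    (hτK : τ ∉ K) (hcard : τ.card = n + 1)
    (ih : Continuous (seqFc hK hq hct0 hct1 n)) :
    Continuous (gSb hK hq hct0 hct1 hτfull hτK hcard) := by
  have hτne : τ.Nonempty := hτfull.1
  set Nτ : Set (Finset V) := {ρ : Finset V | ρ ⊆ τ ∧ ρ ≠ τ ∧ ρ.Nonempty} with hNτ
  have hNfin : Nτ.Finite := finite_proper_faces τ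
  have hNsub : Nτ ⊆ Mn K U n := proper_faces_subset_Mn hτfull hcard
  have hprops := seq_props hK hq hct0 hct1 n
  set A : Set (sphereSet τ) := (fun z : sphereSet τ => z.1.2) ⁻¹' {0} with hA
  set B : Set (sphereSet τ) := (fun z : sphereSet τ => z.1.2) ⁻¹' {1} with hB
  set Cb : Set (sphereSet τ) := (fun z : sphereSet τ => lam τ z.1.1) ⁻¹' {1} with hCb
  have hsnd : Continuous fun z : sphereSet τ => z.1.2 :=
    continuous_snd.comp continuous_subtype_val
  have hfst : Continuous fun z : sphereSet τ => z.1.1 :=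
    continuous_fst.comp continuous_subtype_val
  refine continuous_of_closed_cover3 (A := A) (B := B) (C := Cb)
    (isClosed_singleton.preimage hsnd) (isClosed_singleton.preimage hsnd)
    (isClosed_singleton.preimage ((continuous_lam τ).comp hfst)) ?_ ?_ ?_ ?_
  · -- cover
    rw [Set.eq_univ_iff_forall]
    intro z
    rcases z.2.2.2 with h | h | h
    · exact Or.inr h
    · exact Or.inl (Or.inl h)
    · exact Or.inl (Or.inr h)
  · -- time 0 : the identity inclusion
    have hcont : Continuous fun z : sphereSet τ =>
        incl (M := fullComplex U) τ hτfull ⟨z.1.1, z.2.1⟩ :=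
      (continuous_incl τ hτfull).comp (hfst.subtype_mk _)
    refine hcont.continuousOn.congr ?_
    intro z hz
    apply Subtype.ext
    show gS K U ct q (seqF K U ct q n) τ z.1 = z.1.1
    have hz0 : z.1.2 = 0 := hz
    rw [gS, if_pos hz0]
  · -- time 1 : the coned-off contraction
    have hf1 := f1b_continuous hK hq hct0 hct1 hτfull hτK hcard ih
    have hcont : Continuous fun z : sphereSet τ =>
        rmk (M := fullComplex U) (f1c K U ct q (seqF K U ct q n) τ z.1.1)
          (realization_mono Set.inter_subset_right
            (f1c_mem hK hq hτfull hτK hcard hprops z.2.1)) :=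
      hf1.comp (hfst.subtype_mk fun z => z.2.1)
    refine hcont.continuousOn.congr ?_
    intro z hz
    apply Subtype.ext
    show gS K U ct q (seqF K U ct q n) τ z.1 = _
    have hz1 : z.1.2 = 1 := hz
    rw [gS, if_neg (by rw [hz1]; exact one_ne_zero), if_pos hz1]
    rfl
  · -- the boundary : the previous stage
    rw [continuousOn_iff_continuous_restrict]
    have hmem1 : ∀ w : Cb, w.1.1.1 ∈ realizationSet Nτ := fun w =>
      mem_proper_faces hτne w.1.2.1 w.2
    have hcont : Continuous fun w : Cb =>
        seqFc hK hq hct0 hct1 n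
          (inclusionMap hNsub (rmk (M := Nτ) w.1.1.1 (hmem1 w)), w.1.1.2) := by
      refine ih.comp (Continuous.prodMk ?_ ?_)
      · exact (inclusionMap hNsub).continuous.comp
          (continuous_into_finite hNfin
            (hfst.comp continuous_subtype_val) hmem1)
      · exact hsnd.comp continuous_subtype_val
    refine hcont.congr ?_
    intro w
    apply Subtype.ext
    show seqF K U ct q n (w.1.1.1, w.1.1.2) = gS K U ct q (seqF K U ct q n) τ w.1.1
    have hlam : lam τ w.1.1.1 = 1 := w.2
    have hmem : w.1.1.1 ∈ realizationSet (Mn K U n) :=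
      (mem_Mn_iff_lam hK hτfull hτK hcard w.1.2.1).mpr hlam
    exact (gS_eval_of_mem hK hct1 hτfull hτK hcard hprops w.1.2.1 hmem w.1.1.2).symm

theorem seqFc_continuous : ∀ n, Continuous (seqFc hK hq hct0 hct1 n) := by
  intro n
  induction n with
  | zero =>
    have h0 : Continuous fun p : Realization (Mn K U 0) × ℝ =>
        inclusionMap (Mn_subset_full (K := K) (U := U) (n := 0)) p.1 :=
      (inclusionMap _).continuous.comp continuous_fst
    exact h0.congr fun p => Subtype.ext rfl
  | succ n ih =>
    refine continuous_of_incl_prod fun τ hτ => ?_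
    by_cases hτn : τ ∈ Mn K U n
    · have hcont : Continuous fun w : simplexSet τ × ℝ =>
          seqFc hK hq hct0 hct1 n (incl (M := Mn K U n) τ hτn w.1, cl01 w.2) :=
        ih.comp (((continuous_incl τ hτn).comp continuous_fst).prodMk
          (continuous_cl01.comp continuous_snd))
      refine hcont.congr fun w => ?_
      apply Subtype.ext
      show seqF K U ct q n (w.1.1, cl01 w.2) = seqF K U ct q (n+1) (w.1.1, w.2)
      exact (seqF_succ_of_mem K U ct q n ⟨τ, hτn, w.1.2⟩ w.2).symm
    · -- a new top-dimensional simplex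
      have hτfull : τ ∈ fullComplex U := by
        rcases hτ with h | h
        · exact absurd (LL_subset_Mn h) hτn
        · exact h.1
      have hτK : τ ∉ K := fun hKτ => hτn (LL_subset_Mn ⟨hKτ, hτfull⟩)
      have hcard : τ.card = n + 1 := by
        rcases hτ with h | h
        · exact absurd (LL_subset_Mn h) hτn
        · have := h.2
          by_contra hne
          exact hτn (Or.inr ⟨hτfull, by omega⟩)
      have hτne : τ.Nonempty := hτfull.1
      have hqful : q ∈ realizationSet (fullComplex U) :=
        realization_mono Set.inter_subset_right hq
      have hgSb := gSb_continuous hK hq hct0 hct1 hτfull hτK hcard ih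
      haveI : CompactSpace (sphereSet τ) :=
        isCompact_iff_compactSpace.mp (isCompact_sphereSet τ)
      have hsphere : ∀ w : {w : simplexSet τ × ℝ //
          max (lam τ w.1.1) |2 * cl01 w.2 - 1| ≠ 0},
          (rad τ (max (lam τ w.1.1.1) |2 * cl01 w.1.2 - 1|) w.1.1.1,
            1/2 + (cl01 w.1.2 - 1/2) / max (lam τ w.1.1.1) |2 * cl01 w.1.2 - 1|) ∈
            sphereSet τ := by
        intro w
        have hμpos : 0 < max (lam τ w.1.1.1) |2 * cl01 w.1.2 - 1| :=
          lt_of_le_of_ne (le_max_of_le_right (abs_nonneg _)) (Ne.symm w.2)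
        refine ⟨rad_mem hτne w.1.1.2 hμpos (le_max_left _ _),
          stc_mem hμpos (le_max_right _ _), ?_⟩
        rcases max_choice (lam τ w.1.1.1) |2 * cl01 w.1.2 - 1| with hc | hc
        · left
          have hlpos : 0 < lam τ w.1.1.1 := hc ▸ hμpos
          rw [lam_rad hτne _ hμpos, hc, div_self (ne_of_gt hlpos)]
        · rcases stc_endpoint hμpos hc.symm with h | h
          · exact Or.inr (Or.inl h)
          · exact Or.inr (Or.inr h)
      refine cone_continuous
        (J := (⟨fun p : Realization (fullComplex U) × ℝ =>
          rmk (Jq q p.1.1 p.2) (Jq_mem hqful p.1.2 p.2), continuous_Jq hqful⟩ :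
          C(Realization (fullComplex U) × ℝ, Realization (fullComplex U))))
        (t0 := rmk q hqful)
        (fun y => Subtype.ext (by show Jq q y.1 0 = q; rw [Jq_zero]))
        (μ := fun w : simplexSet τ × ℝ => max (lam τ w.1.1) |2 * cl01 w.2 - 1|)
        (((continuous_lam τ).comp (continuous_subtype_val.comp continuous_fst)).max
          (((continuous_const.mul (continuous_cl01.comp continuous_snd)).sub
            continuous_const).abs))
        (g := fun w => gSb hK hq hct0 hct1 hτfull hτK hcard
          ⟨(rad τ (max (lam τ w.1.1.1) |2 * cl01 w.1.2 - 1|) w.1.1.1,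
            1/2 + (cl01 w.1.2 - 1/2) / max (lam τ w.1.1.1) |2 * cl01 w.1.2 - 1|),
            hsphere w⟩)
        ?_ (hC := isCompact_range hgSb) (fun w => ⟨_, rfl⟩) ?_ ?_
      · -- continuity of g
        refine hgSb.comp (Continuous.subtype_mk (Continuous.prodMk ?_ ?_) _)
        · refine continuous_rad τ ?_ ?_ fun w => w.2
          · exact continuous_subtype_val.comp
              (continuous_fst.comp continuous_subtype_val)
          · exact (((continuous_lam τ).comp (continuous_subtype_val.comp
              continuous_fst)).max (((continuous_const.mul
              (continuous_cl01.comp continuous_snd)).sub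
              continuous_const).abs)).comp continuous_subtype_val
        · refine continuous_const.add (Continuous.div ?_ ?_ fun w => w.2)
          · exact (continuous_cl01.comp (continuous_snd.comp
              continuous_subtype_val)).sub continuous_const
          · exact (((continuous_lam τ).comp (continuous_subtype_val.comp
              continuous_fst)).max (((continuous_const.mul
              (continuous_cl01.comp continuous_snd)).sub
              continuous_const).abs)).comp continuous_subtype_val
      · -- the formula away from the apex
        intro w h
        apply Subtype.ext
        show seqF K U ct q (n+1) (w.1.1, w.2) = _
        rw [seq_succ_eq_coneF hK hq hct0 hct1 hτfull hτK hcard w.1.2 w.2]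
        simp only [coneF]
        rw [if_neg h]
        rfl
      · -- the apex value
        intro w h
        apply Subtype.ext
        show seqF K U ct q (n+1) (w.1.1, w.2) = q
        rw [seq_succ_eq_coneF hK hq hct0 hct1 hτfull hτK hcard w.1.2 w.2]
        simp only [coneF]
        rw [if_pos h]

end Induction2



variable {V : Type*} {K : Set (Finset V)} {U : Set V}
  {ct : C(Realization (K ∩ fullComplex U) × ℝ, Realization (K ∩ fullComplex U))}
  {q : V → ℝ}

lemma seqF_of_le (hK : IsComplex K) {m n : ℕ} (h : m ≤ n) {x : V → ℝ}
    (hx : x ∈ realizationSet (Mn K U m)) (t : ℝ) :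
    seqF K U ct q n (x, t) = seqF K U ct q m (x, cl01 t) := by
  induction n, h using Nat.le_induction generalizing t with
  | base => exact seqF_clamp K U ct q m x t
  | succ n hmn ih =>
    have hxn : x ∈ realizationSet (Mn K U n) := realization_mono (Mn_mono hmn) hx
    rw [seqF_succ_of_mem K U ct q n hxn t, ih (cl01 t), cl01_cl01]

lemma mem_Mn_jsupp {x : V → ℝ} (hx : x ∈ realizationSet (fullComplex U)) :
    x ∈ realizationSet (Mn K U (jsupp x).card) := by
  obtain ⟨τ, hτ, hxτ⟩ := hx
  have hj : jsupp x = gsupp x τ := jsupp_eq hxτ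
  refine ⟨jsupp x, Or.inr ⟨⟨?_, ?_⟩, le_rfl⟩, ?_⟩
  · rw [hj]; exact gsupp_nonempty hxτ
  · rw [hj]
    exact subset_trans (Finset.coe_subset.mpr gsupp_subset) hτ.2
  · rw [hj]; exact mem_simplexSet_gsupp hxτ

/-- Points lying in both `|K|` and `|pow U|` lie in `|K ∩ pow U|`. -/
lemma mem_LL_of_mem_both (hK : IsComplex K) {σ : Finset V} (hσ : σ ∈ K) {x : V → ℝ}
    (hx : x ∈ simplexSet σ) (hfull : x ∈ realizationSet (fullComplex U)) :
    x ∈ realizationSet (K ∩ fullComplex U) := by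
  obtain ⟨τ, hτ, hxτ⟩ := hfull
  refine ⟨gsupp x σ, ⟨gsupp_mem hK hσ hx, ?_, ?_⟩, mem_simplexSet_gsupp hx⟩
  · exact gsupp_nonempty hx
  · rw [gsupp_eq hx hxτ]
    exact subset_trans (Finset.coe_subset.mpr gsupp_subset) hτ.2

section Assembly

variable (hK : IsComplex K) (hq : q ∈ realizationSet (K ∩ fullComplex U))
  (hct0 : ∀ y, (ct (y, (0:ℝ))).1 = q) (hct1 : ∀ y, ct (y, (1:ℝ)) = y)

/-- The global strong deformation retraction of `|pow U|` onto `|K ∩ pow U|`. -/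
def Dc (p : Realization (fullComplex U) × ℝ) : Realization (fullComplex U) :=
  seqFc hK hq hct0 hct1 (jsupp p.1.1).card (rmk p.1.1 (mem_Mn_jsupp p.1.2), p.2)

lemma Dc_val (p : Realization (fullComplex U) × ℝ) :
    (Dc hK hq hct0 hct1 p).1 = seqF K U ct q (jsupp p.1.1).card (p.1.1, p.2) := rfl

lemma Dc_continuous : Continuous (Dc hK hq hct0 hct1) := by
  refine continuous_of_incl_prod fun τ hτ => ?_
  have hτMn : τ ∈ Mn K U τ.card := Or.inr ⟨hτ, le_rfl⟩
  have hcont : Continuous fun w : simplexSet τ × ℝ =>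
      seqFc hK hq hct0 hct1 τ.card (incl (M := Mn K U τ.card) τ hτMn w.1, w.2) :=
    (seqFc_continuous hK hq hct0 hct1 τ.card).comp
      (((continuous_incl τ hτMn).comp continuous_fst).prodMk continuous_snd)
  refine hcont.congr fun w => ?_
  apply Subtype.ext
  show seqF K U ct q τ.card (w.1.1, w.2) = seqF K U ct q (jsupp w.1.1).card (w.1.1, w.2)
  have hxfull : w.1.1 ∈ realizationSet (fullComplex U) := ⟨τ, hτ, w.1.2⟩
  have hj : jsupp w.1.1 = gsupp w.1.1 τ := jsupp_eq w.1.2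
  have hle : (jsupp w.1.1).card ≤ τ.card := by
    rw [hj]; exact Finset.card_le_card gsupp_subset
  rw [seqF_of_le hK hle (mem_Mn_jsupp hxfull) w.2,
    seqF_of_le hK (le_refl (jsupp w.1.1).card) (mem_Mn_jsupp hxfull) w.2]

lemma Dc_zero (x : Realization (fullComplex U)) : (Dc hK hq hct0 hct1 (x, 0)).1 = x.1 :=
  (seq_props hK hq hct0 hct1 _ x.1 (mem_Mn_jsupp x.2)).2.1

lemma Dc_one (x : Realization (fullComplex U)) :
    (Dc hK hq hct0 hct1 (x, 1)).1 ∈ realizationSet (K ∩ fullComplex U) :=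
  (seq_props hK hq hct0 hct1 _ x.1 (mem_Mn_jsupp x.2)).2.2.1

lemma Dc_fix (x : Realization (fullComplex U))
    (hx : x.1 ∈ realizationSet (K ∩ fullComplex U)) (t : ℝ) :
    (Dc hK hq hct0 hct1 (x, t)).1 = x.1 :=
  (seq_props hK hq hct0 hct1 _ x.1 (mem_Mn_jsupp x.2)).2.2.2 hx t

/-- The global homotopy, as a raw function. -/
def Fraw (x : Realization (K ∪ fullComplex U)) (t : ℝ) : V → ℝ :=
  if h : x.1 ∈ realizationSet (fullComplex U) then
    (Dc hK hq hct0 hct1 (rmk x.1 h, t)).1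
  else x.1

lemma Fraw_mem (x : Realization (K ∪ fullComplex U)) (t : ℝ) :
    Fraw hK hq hct0 hct1 x t ∈ realizationSet (K ∪ fullComplex U) := by
  rw [Fraw]
  by_cases h : x.1 ∈ realizationSet (fullComplex U)
  · rw [dif_pos h]
    exact realization_mono Set.subset_union_right (Dc hK hq hct0 hct1 (rmk x.1 h, t)).2
  · rw [dif_neg h]
    exact x.2

lemma Fraw_fix_K {σ : Finset V} (hσ : σ ∈ K) {x : Realization (K ∪ fullComplex U)}
    (hx : x.1 ∈ simplexSet σ) (t : ℝ) : Fraw hK hq hct0 hct1 x t = x.1 := by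
  rw [Fraw]
  by_cases h : x.1 ∈ realizationSet (fullComplex U)
  · rw [dif_pos h]
    exact Dc_fix hK hq hct0 hct1 _ (mem_LL_of_mem_both hK hσ hx h) t
  · rw [dif_neg h]

lemma Fraw_zero (x : Realization (K ∪ fullComplex U)) :
    Fraw hK hq hct0 hct1 x 0 = x.1 := by
  rw [Fraw]
  by_cases h : x.1 ∈ realizationSet (fullComplex U)
  · rw [dif_pos h]
    exact Dc_zero hK hq hct0 hct1 _
  · rw [dif_neg h]

lemma Fraw_one_mem_K (x : Realization (K ∪ fullComplex U)) :
    Fraw hK hq hct0 hct1 x 1 ∈ realizationSet K := by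
  rw [Fraw]
  by_cases h : x.1 ∈ realizationSet (fullComplex U)
  · rw [dif_pos h]
    exact realization_mono Set.inter_subset_left (Dc_one hK hq hct0 hct1 _)
  · rw [dif_neg h]
    obtain ⟨σ, hσ, hxσ⟩ := x.2
    rcases hσ with hσ | hσ
    · exact ⟨σ, hσ, hxσ⟩
    · exact absurd ⟨σ, hσ, hxσ⟩ h

/-- The bundled global homotopy. -/
def Fc (p : Realization (K ∪ fullComplex U) × ℝ) : Realization (K ∪ fullComplex U) :=
  rmk (Fraw hK hq hct0 hct1 p.1 p.2) (Fraw_mem hK hq hct0 hct1 p.1 p.2)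

lemma Fc_continuous : Continuous (Fc hK hq hct0 hct1) := by
  refine continuous_of_incl_prod fun σ hσ => ?_
  by_cases hσfull : σ ∈ fullComplex U
  · have hcont : Continuous fun w : simplexSet σ × ℝ =>
        inclusionMap (Set.subset_union_right : fullComplex U ⊆ K ∪ fullComplex U)
          (Dc hK hq hct0 hct1 (incl (M := fullComplex U) σ hσfull w.1, w.2)) :=
      (inclusionMap _).continuous.comp ((Dc_continuous hK hq hct0 hct1).comp
        (((continuous_incl σ hσfull).comp continuous_fst).prodMk continuous_snd))
    refine hcont.congr fun w => ?_
    apply Subtype.ext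
    show _ = Fraw hK hq hct0 hct1 (incl (M := K ∪ fullComplex U) σ hσ w.1) w.2
    have hmm : (incl (M := K ∪ fullComplex U) σ hσ w.1).1 ∈
        realizationSet (fullComplex U) := ⟨σ, hσfull, w.1.2⟩
    rw [Fraw, dif_pos hmm]
    rfl
  · have hσK : σ ∈ K := hσ.resolve_right hσfull
    have hcont : Continuous fun w : simplexSet σ × ℝ =>
        incl (M := K ∪ fullComplex U) σ hσ w.1 :=
      (continuous_incl σ hσ).comp continuous_fst
    refine hcont.congr fun w => ?_
    exact Subtype.ext (Fraw_fix_K hK hq hct0 hct1 hσK w.1.2 w.2).symm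

/-- The retraction `G`. -/
def Gc (x : Realization (K ∪ fullComplex U)) : Realization K :=
  rmk (Fraw hK hq hct0 hct1 x 1) (Fraw_one_mem_K hK hq hct0 hct1 x)

lemma Gc_continuous : Continuous (Gc hK hq hct0 hct1) := by
  refine continuous_of_incl fun σ hσ => ?_
  by_cases hσfull : σ ∈ fullComplex U
  · have hmem : ∀ y : simplexSet σ,
        (Dc hK hq hct0 hct1 (incl (M := fullComplex U) σ hσfull y, (1:ℝ))).1 ∈
          realizationSet (K ∩ fullComplex U) := fun y => Dc_one hK hq hct0 hct1 _
    have hcont0 : Continuous fun y : simplexSet σ =>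
        Dc hK hq hct0 hct1 (incl (M := fullComplex U) σ hσfull y, (1:ℝ)) :=
      (Dc_continuous hK hq hct0 hct1).comp
        ((continuous_incl σ hσfull).prodMk continuous_const)
    have hcont : Continuous fun y : simplexSet σ =>
        inclusionMap (Set.inter_subset_left : K ∩ fullComplex U ⊆ K)
          (rmk (M := K ∩ fullComplex U) _ (hmem y)) :=
      (inclusionMap _).continuous.comp
        (continuous_corestrict (isComplex_inter hK U) hcont0 hmem)
    refine hcont.congr fun y => ?_
    apply Subtype.ext
    show _ = Fraw hK hq hct0 hct1 (incl (M := K ∪ fullComplex U) σ hσ y) 1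
    have hmm : (incl (M := K ∪ fullComplex U) σ hσ y).1 ∈
        realizationSet (fullComplex U) := ⟨σ, hσfull, y.2⟩
    rw [Fraw, dif_pos hmm]
    rfl
  · have hσK : σ ∈ K := hσ.resolve_right hσfull
    have hcont : Continuous fun y : simplexSet σ => incl (M := K) σ hσK y :=
      continuous_incl σ hσK
    refine hcont.congr fun y => ?_
    exact Subtype.ext ((Fraw_fix_K hK hq hct0 hct1 hσK
      (x := incl (M := K ∪ fullComplex U) σ hσ y) y.2 1).symm)

end Assembly



end GluingAux
end GluingAux

open GluingAux in
/-- **The Gluing Lemma.** If `U` is a set of vertices of a simplicial complex `Σ` such that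
`|Σ ∩ pow(U)|` is contractible, then the inclusion `|Σ| ↪ |Σ ∪ pow(U)|` is a homotopy
equivalence. -/
theorem gluing_lemma {V : Type*} {K : Set (Finset V)} (hK : IsComplex K)
    (U : Set V) (hU : U ⊆ vertexSet K)
    (hcontr : ContractibleSpace (Realization (K ∩ fullComplex U))) :
    ∃ G : C(Realization (K ∪ fullComplex U), Realization K),
      (G.comp (inclusionMap Set.subset_union_left)).Homotopic (ContinuousMap.id _) ∧
      ((inclusionMap (Set.subset_union_left : K ⊆ K ∪ fullComplex U)).comp G).Homotopic
        (ContinuousMap.id _) := by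
  classical
  haveI := hcontr
  obtain ⟨p0, hh⟩ := id_nullhomotopic (Realization (K ∩ fullComplex U))
  let H := hh.some
  set q : V → ℝ := p0.1 with hqdef
  have h1proj : Set.projIcc (0:ℝ) 1 zero_le_one 1 = 1 :=
    Subtype.ext (by norm_num [Set.projIcc])
  have h0proj : Set.projIcc (0:ℝ) 1 zero_le_one 0 = 0 :=
    Subtype.ext (by norm_num [Set.projIcc])
  let ct : C(Realization (K ∩ fullComplex U) × ℝ, Realization (K ∩ fullComplex U)) :=
    ⟨fun p => H (Set.projIcc 0 1 zero_le_one (1 - p.2), p.1),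
     H.continuous.comp ((continuous_projIcc.comp
       (continuous_const.sub continuous_snd)).prodMk continuous_fst)⟩
  have hq : q ∈ realizationSet (K ∩ fullComplex U) := p0.2
  have hct0 : ∀ y, (ct (y, (0:ℝ))).1 = q := by
    intro y
    show (H (Set.projIcc 0 1 zero_le_one (1 - 0), y)).1 = q
    rw [show (1:ℝ) - 0 = 1 by ring, h1proj, H.apply_one]
    rfl
  have hct1 : ∀ y, ct (y, (1:ℝ)) = y := by
    intro y
    show H (Set.projIcc 0 1 zero_le_one (1 - 1), y) = y
    rw [show (1:ℝ) - 1 = 0 by ring, h0proj, H.apply_zero]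
    rfl
  refine ⟨⟨Gc hK hq hct0 hct1, Gc_continuous hK hq hct0 hct1⟩, ?_, ?_⟩
  · have heq : (ContinuousMap.mk (Gc hK hq hct0 hct1)
        (Gc_continuous hK hq hct0 hct1)).comp
        (inclusionMap Set.subset_union_left) =
        ContinuousMap.id (Realization K) := by
      ext x
      apply Subtype.ext
      obtain ⟨σ, hσ, hxσ⟩ := x.2
      exact Fraw_fix_K hK hq hct0 hct1 hσ
        (x := inclusionMap Set.subset_union_left x) hxσ 1
    rw [heq]
  · refine ContinuousMap.Homotopic.symm ⟨{
      toFun := fun p => Fc hK hq hct0 hct1 (p.2, (p.1 : ℝ)),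
      continuous_toFun := (Fc_continuous hK hq hct0 hct1).comp
        (continuous_snd.prodMk (continuous_subtype_val.comp continuous_fst)),
      map_zero_left := fun x => Subtype.ext (Fraw_zero hK hq hct0 hct1 x),
      map_one_left := fun x => Subtype.ext rfl }⟩
end

section
/- For n ≥ 3, let G_n be the cycle network: vertex set {x_1, …, x_n} with ω(x_i, x_j) = (j − i) mod n (the shortest directed path length in the directed n-cycle with unit weights). For 1 ≤ δ < 2, the Dowker sink complex D^si_{δ,G_n} contains no 2-simplices; i.e., no three distinct vertices admit a common δ-sink. -/
/-- The weight function of the cycle network `G_n` on vertex set `Fin n`: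
`ω(i, j)` is the number of forward steps from `i` to `j` around the directed `n`-cycle,
i.e. `(j - i) mod n`. -/
noncomputable def cycOmega (n : ℕ) [NeZero n] : Fin n → Fin n → ℝ :=
  fun i j => (((j - i : Fin n) : ℕ) : ℝ)

/-- **No 2-simplices in the Dowker sink complex of a cycle network for `1 ≤ δ < 2`:**
no three distinct vertices admit a common `δ`-sink. -/
theorem cycle_no_two_simplices (n : ℕ) [NeZero n] (hn : 3 ≤ n)
    (δ : ℝ) (h1 : 1 ≤ δ) (h2 : δ < 2) :
    ∀ a b c : Fin n, a ≠ b → a ≠ c → b ≠ c →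
      ¬ ∃ s : Fin n, cycOmega n a s ≤ δ ∧ cycOmega n b s ≤ δ ∧ cycOmega n c s ≤ δ := by
  rintro a b c hab hac hbc ⟨s, ha, hb, hc⟩
  have key : ∀ v : Fin n, cycOmega n v s ≤ δ → v = s ∨ v = s - 1 := by
    intro v h
    simp only [cycOmega] at h
    have hlt : ((s - v : Fin n) : ℕ) < 2 := by
      exact_mod_cast lt_of_le_of_lt h h2
    interval_cases hv : ((s - v : Fin n) : ℕ)
    · left
      have : s - v = 0 := Fin.ext (by simp [hv])
      have := sub_eq_zero.mp this
      exact this.symm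
    · right
      have h1n : ((1 : Fin n) : ℕ) = 1 := by
        have : 1 < n := lt_of_lt_of_le (by norm_num) hn
        simp [Fin.val_one', Nat.mod_eq_of_lt this]
      have : s - v = 1 := Fin.ext (by rw [hv, h1n])
      have := sub_eq_iff_eq_add.mp this
      rw [this]
      exact (add_sub_cancel_left 1 v).symm
  rcases key a ha with rfl | rfl <;> rcases key b hb with h | h <;>
    rcases key c hc with h' | h' <;> simp_all
end

section
/- Let n ∈ ℕ and let 𝕏_n ⊆ S¹ be n equally spaced points on the circle of unit circumference with the arc-length metric, and let G_n be the directed cycle network on the same n points with ω(x_i,x_j) = (j−i) mod n. Then for every δ ∈ [0,1], the Čech complex Č(𝕏_n, δ/2) (nerve of closed balls of radius δ/2 centered at the points of 𝕏_n, with intersections taken in S¹) equals the Dowker sink complex D^si_{nδ, G_n}. -/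
/-- The Dowker sink complex of a network `(X, ω)` at resolution `δ`. -/
def dowkerSink {X : Type*} (ω : X → X → ℝ) (δ : ℝ) : Set (Finset X) :=
  {σ | σ.Nonempty ∧ ∃ x' : X, ∀ x ∈ σ, ω x x' ≤ δ}

/-- The `i`-th of `n` equally spaced points on the circle `S¹ = ℝ/ℤ` of unit circumference. -/
noncomputable def circlePoint (n : ℕ) (i : Fin n) : AddCircle (1 : ℝ) :=
  (((i : ℕ) : ℝ) / (n : ℝ) : ℝ)

/-- The Čech complex at radius `ε` of the `n` equally spaced points `𝕏_n ⊆ S¹`: the nerve of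
the closed balls of radius `ε` centered at the points, with intersections taken in `S¹`. -/
noncomputable def cechCircle (n : ℕ) (ε : ℝ) : Set (Finset (Fin n)) :=
  {σ | σ.Nonempty ∧ ∃ c : AddCircle (1 : ℝ), ∀ i ∈ σ, dist (circlePoint n i) c ≤ ε}

lemma fin_sub_val_int (n : ℕ) [NeZero n] (a b : Fin n) :
    ((b - a).val : ℤ) = ((b.val : ℤ) - a.val) % n := by
  have ha := a.isLt
  rw [Fin.sub_def]
  simp only [Fin.val_mk, Int.natCast_emod, Nat.cast_add, Nat.cast_sub ha.le]
  rw [show (n : ℤ) - a + b = (b - a) + 1 * n by ring, Int.add_mul_emod_self_right]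

lemma norm_addCircle_le_abs (x : ℝ) : ‖(x : AddCircle (1 : ℝ))‖ ≤ |x| := by
  rw [AddCircle.norm_eq]
  simp only [inv_one, one_mul, mul_one]
  by_cases h : -(1 / 2) ≤ x ∧ x < 1 / 2
  · rw [(round_eq_zero_iff.mpr ⟨h.1, h.2⟩ : round x = 0)]
    simp
  · refine (abs_sub_round x).trans ?_
    push_neg at h
    rcases le_or_gt (-(1 / 2)) x with h' | h'
    · have := h h'
      calc (1:ℝ)/2 ≤ x := this
        _ ≤ |x| := le_abs_self x
    · calc (1:ℝ)/2 ≤ -x := by linarith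
        _ ≤ |x| := neg_le_abs x

lemma coe_int_addCircle (q : ℤ) : ((q : ℝ) : AddCircle (1 : ℝ)) = 0 := by
  rw [AddCircle.coe_eq_zero_iff]
  exact ⟨q, by simp⟩

/-- **The Čech complex of `n` equally spaced points on the unit-circumference circle at
radius `δ/2` equals the Dowker sink complex of the cycle network `G_n` at resolution `nδ`,
for every `δ ∈ [0,1]`.** -/
theorem cech_eq_dowker (n : ℕ) [NeZero n] (δ : ℝ) (h0 : 0 ≤ δ) (h1 : δ ≤ 1) :
    cechCircle n (δ / 2) = dowkerSink (cycOmega n) (n * δ) := by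
  have hn0 : 0 < n := Nat.pos_of_ne_zero (NeZero.ne n)
  have hn : (0 : ℝ) < n := by exact_mod_cast hn0
  ext σ
  simp only [cechCircle, dowkerSink, Set.mem_setOf_eq]
  constructor
  · rintro ⟨hne, c, hc⟩
    refine ⟨hne, ?_⟩
    obtain ⟨cr, rfl⟩ := QuotientAddGroup.mk_surjective c
    set m : ℤ := ⌊(n : ℝ) * cr + n * δ / 2⌋ with hm
    have hx'lt : (m % n).toNat < n := by
      have h1 : m % (n : ℤ) < n := Int.emod_lt_of_pos m (by exact_mod_cast hn0)
      have h2 : 0 ≤ m % (n : ℤ) := Int.emod_nonneg m (by exact_mod_cast hn0.ne')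
      omega
    refine ⟨⟨(m % n).toNat, hx'lt⟩, ?_⟩
    intro i hi
    have hdist := hc i hi
    rw [circlePoint, show ((cr : AddCircle (1:ℝ))) = ((cr : ℝ) : AddCircle (1:ℝ)) from rfl,
      dist_eq_norm, ← AddCircle.coe_sub, AddCircle.norm_eq] at hdist
    simp only [inv_one, one_mul, mul_one] at hdist
    set k : ℤ := round ((i.val : ℝ) / n - cr) with hk
    -- the representative r = i/n - k lies in [cr - δ/2, cr + δ/2]
    have hrep : |((i.val : ℝ) / n - k) - cr| ≤ δ / 2 := by
      have : (i.val : ℝ) / n - cr - k = ((i.val : ℝ) / n - k) - cr := by ring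
      rwa [this] at hdist
    rw [abs_le] at hrep
    set d : ℤ := m - ((i.val : ℤ) - k * n) with hd
    have hnr : (((i.val : ℤ) - k * n : ℤ) : ℝ) = n * ((i.val : ℝ) / n - k) := by
      push_cast
      field_simp
    have hd0 : 0 ≤ d := by
      have : (((i.val : ℤ) - k * n : ℤ) : ℝ) ≤ (n : ℝ) * cr + n * δ / 2 := by
        rw [hnr]
        nlinarith [hrep.2]
      have := Int.le_floor.mpr this
      omega
    have hdle : (d : ℝ) ≤ n * δ := by
      have hfl : (m : ℝ) ≤ (n : ℝ) * cr + n * δ / 2 := Int.floor_le _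
      have : (n : ℝ) * cr ≤ (((i.val : ℤ) - k * n : ℤ) : ℝ) + n * δ / 2 := by
        rw [hnr]
        nlinarith [hrep.1]
      have hdr : (d : ℝ) = (m : ℝ) - (((i.val : ℤ) - k * n : ℤ) : ℝ) := by
        rw [hd]; push_cast; ring
      rw [hdr]; linarith
    -- now compute cycOmega
    show (((( ⟨(m % n).toNat, hx'lt⟩ : Fin n) - i).val : ℕ) : ℝ) ≤ n * δ
    have h2 : 0 ≤ m % (n : ℤ) := Int.emod_nonneg m (by exact_mod_cast hn0.ne')
    have hval : (((⟨(m % n).toNat, hx'lt⟩ : Fin n) - i).val : ℤ) = d % n := by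
      rw [fin_sub_val_int]
      simp only [Fin.val_mk, Int.toNat_of_nonneg h2]
      conv_rhs => rw [hd]
      rw [show m - ((i.val : ℤ) - k * n) = (m - (i.val : ℤ)) + k * n by ring,
        Int.add_mul_emod_self_right]
      rw [Int.sub_emod, Int.emod_emod_of_dvd _ dvd_rfl, ← Int.sub_emod]
    have hmodle : d % (n : ℤ) ≤ d := by
      have h1 : (0 : ℤ) ≤ (n : ℤ) * (d / n) :=
        mul_nonneg (Int.natCast_nonneg n) (Int.ediv_nonneg hd0 (Int.natCast_nonneg n))
      have h2 := Int.emod_def d (n : ℤ)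
      linarith
    have hcast : ((((⟨(m % n).toNat, hx'lt⟩ : Fin n) - i).val : ℤ) : ℝ) ≤ (d : ℝ) := by
      exact_mod_cast hval ▸ hmodle
    calc ((((⟨(m % n).toNat, hx'lt⟩ : Fin n) - i).val : ℕ) : ℝ)
        = ((((⟨(m % n).toNat, hx'lt⟩ : Fin n) - i).val : ℤ) : ℝ) := by push_cast; ring
      _ ≤ (d : ℝ) := hcast
      _ ≤ n * δ := hdle
  · rintro ⟨hne, x', hx⟩
    refine ⟨hne, (((x'.val : ℕ) : ℝ) / n - δ / 2 : ℝ), ?_⟩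
    intro i hi
    have h := hx i hi
    have he0 : (0 : ℝ) ≤ (((x' - i).val : ℕ) : ℝ) := by positivity
    have heδ : ((((x' - i).val : ℕ) : ℝ)) / n ≤ δ := by
      rw [div_le_iff₀ hn]
      calc ((((x' - i).val : ℕ) : ℝ)) ≤ n * δ := h
        _ = δ * n := by ring
    -- find integer shift
    obtain ⟨q, hq⟩ : ∃ q : ℤ, (i.val : ℤ) - x'.val = -(((x' - i).val : ℕ) : ℤ) + n * q := by
      refine ⟨-(((x'.val : ℤ) - i.val) / n), ?_⟩
      have h1 := fin_sub_val_int n i x'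
      have h2 := Int.mul_ediv_add_emod ((x'.val : ℤ) - (i.val : ℤ)) (n : ℤ)
      linarith
    set e : ℝ := (((x' - i).val : ℕ) : ℝ) with hee
    rw [circlePoint, dist_eq_norm, ← AddCircle.coe_sub]
    have hq' : (i.val : ℝ) - (x'.val : ℝ) = -e + (n : ℝ) * q := by
      have := congrArg (fun z : ℤ => (z : ℝ)) hq
      push_cast at this
      simpa [hee] using this
    have hkey : (i.val : ℝ) / n - (((x'.val : ℕ) : ℝ) / n - δ / 2) = (δ / 2 - e / n) + (q : ℝ) := by
      rw [show (i.val : ℝ) / n - (((x'.val : ℕ) : ℝ) / n - δ / 2)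
          = δ / 2 + ((i.val : ℝ) - (x'.val : ℝ)) / n by ring, hq']
      field_simp
      ring
    rw [hkey, AddCircle.coe_add, coe_int_addCircle, add_zero]
    calc ‖((δ / 2 - e / n : ℝ) : AddCircle (1 : ℝ))‖ ≤ |δ / 2 - e / n| := norm_addCircle_le_abs _
      _ ≤ δ / 2 := by
          rw [abs_le]
          constructor
          · have : 0 ≤ e / n := by positivity
            linarith
          · linarith [div_nonneg he0 hn.le, heδ]
end
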